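/- arXiv:1301.2379 — 7 statements merged into one kernel-verified Lean document; each statement's English description precedes it below -/
import Mathlib

section
/- Let n ≥ 2 and let K be an n×n real matrix which is a Kolmogorov (master equation) matrix, i.e. K i j ≥ 0 for all i ≠ j and every column of K sums to zero (∑_i K i j = 0 for each j). Then every complex eigenvalue λ of K with λ ≠ 0 satisfies |Im λ| ≤ cot(π/n) · |Re λ|. -/
open Real Finset

noncomputable section

/-- Re(e^{-iξ} w). -/
def Ff (ξ : ℝ) (w : ℂ) : ℝ := w.re * Real.cos ξ + w.im * Real.sin ξ

/-- Im(e^{-iξ} w). -/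
def Gg (ξ : ℝ) (w : ℂ) : ℝ := w.im * Real.cos ξ - w.re * Real.sin ξ

lemma Ff_add_angle (φ Δ : ℝ) (w : ℂ) :
    Ff (φ + Δ) w = Real.cos Δ * Ff φ w + Real.sin Δ * Gg φ w := by
  simp [Ff, Gg, Real.cos_add, Real.sin_add]; ring

lemma Gg_add_angle (φ Δ : ℝ) (w : ℂ) :
    Gg (φ + Δ) w = Real.cos Δ * Gg φ w - Real.sin Δ * Ff φ w := by
  simp [Ff, Gg, Real.cos_add, Real.sin_add]; ring

lemma Ff_periodic (φ : ℝ) (k : ℤ) (w : ℂ) : Ff (φ + 2*π*k) w = Ff φ w := by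
  have h1 : φ + 2*π*k = φ + k * (2*π) := by ring
  simp [Ff, h1, Real.cos_add_int_mul_two_pi, Real.sin_add_int_mul_two_pi]

lemma Gg_periodic (φ : ℝ) (k : ℤ) (w : ℂ) : Gg (φ + 2*π*k) w = Gg φ w := by
  have h1 : φ + 2*π*k = φ + k * (2*π) := by ring
  simp [Gg, h1, Real.cos_add_int_mul_two_pi, Real.sin_add_int_mul_two_pi]

lemma Ff_pi (φ : ℝ) (w : ℂ) : Ff (φ + π) w = -Ff φ w := by
  simp [Ff, Real.cos_add, Real.sin_add]; ring

lemma Ff_sub (ξ : ℝ) (w z : ℂ) : Ff ξ (w - z) = Ff ξ w - Ff ξ z := by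
  simp [Ff]; ring

lemma Ff_sum {α : Type*} (s : Finset α) (ξ : ℝ) (z : α → ℂ) :
    Ff ξ (∑ j ∈ s, z j) = ∑ j ∈ s, Ff ξ (z j) := by
  simp [Ff, Complex.re_sum, Complex.im_sum, Finset.sum_mul, ← Finset.sum_add_distrib]

lemma Ff_real_mul (ξ : ℝ) (r : ℝ) (w : ℂ) : Ff ξ ((r : ℂ) * w) = r * Ff ξ w := by
  simp [Ff, Complex.mul_re, Complex.mul_im]; ring

lemma Ff_complex_mul (ξ : ℝ) (l w : ℂ) :
    Ff ξ (l * w) = l.re * Ff ξ w - l.im * Gg ξ w := by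
  simp [Ff, Gg, Complex.mul_re, Complex.mul_im]; ring

lemma Ff_Gg_inj (ξ : ℝ) {w z : ℂ} (h1 : Ff ξ w = Ff ξ z) (h2 : Gg ξ w = Gg ξ z) : w = z := by
  simp only [Ff, Gg] at h1 h2
  have hc := Real.sin_sq_add_cos_sq ξ
  have e1 : (w.re - z.re) * Real.cos ξ + (w.im - z.im) * Real.sin ξ = 0 := by linarith
  have e2 : (w.im - z.im) * Real.cos ξ - (w.re - z.re) * Real.sin ξ = 0 := by linarith
  have e3 : w.re - z.re = 0 := by
    linear_combination Real.cos ξ * e1 - Real.sin ξ * e2 - (w.re - z.re) * hc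
  have e4 : w.im - z.im = 0 := by
    linear_combination Real.sin ξ * e1 + Real.cos ξ * e2 - (w.im - z.im) * hc
  apply Complex.ext <;> linarith

lemma Ff_interp (x c A : ℝ) (w : ℂ) :
    Ff (x + A) w * Real.sin c = Real.sin (c - A) * Ff x w + Real.sin A * Ff (x + c) w := by
  simp [Ff, Real.sin_sub, Real.cos_add, Real.sin_add]; ring

lemma Ff_exp_re (ξ : ℝ) (w : ℂ) : Ff ξ w = (Complex.exp (-(ξ:ℂ) * Complex.I) * w).re := by
  have : Complex.exp (-(ξ:ℂ) * Complex.I) = Complex.exp (((-ξ : ℝ) : ℂ) * Complex.I) := by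
    push_cast; ring_nf
  rw [this, Complex.exp_mul_I]
  simp [Complex.mul_re, Complex.cos_ofReal_re, Complex.sin_ofReal_re, Ff]
  ring

lemma continuous_Ff (w : ℂ) : Continuous fun ξ => Ff ξ w := by
  unfold Ff
  exact (continuous_const.mul Real.continuous_cos).add (continuous_const.mul Real.continuous_sin)

/-- rotation lemma: orbit of a nonzero point under multiplication by μ with Im μ > 0
hits the halfplane Ff ξ > 0. -/
lemma rotation_hits (ξ : ℝ) (w : ℂ) (hw : w ≠ 0) (μ : ℂ) (hμ : 0 < μ.im) :
    ∃ k : ℕ, 0 < Ff ξ (μ ^ k * w) := by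
  classical
  set z : ℂ := Complex.exp (-(ξ:ℂ) * Complex.I) * w with hz
  have hzne : z ≠ 0 := mul_ne_zero (Complex.exp_ne_zero _) hw
  have hμne : μ ≠ 0 := by intro h; rw [h] at hμ; simp at hμ
  set R := ‖μ‖ with hR
  set ψ := Complex.arg μ with hψ
  have hRpos : 0 < R := norm_pos_iff.mpr hμne
  have hψpos : 0 < ψ := by
    by_contra h
    push_neg at h
    have hs : Real.sin ψ = μ.im / ‖μ‖ := Complex.sin_arg μ
    have : 0 < Real.sin ψ := by rw [hs]; positivity
    have : Real.sin ψ ≤ 0 :=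
      Real.sin_nonpos_of_nonpos_of_neg_pi_le h (le_of_lt (Complex.neg_pi_lt_arg μ))
    linarith
  have hψlt : ψ < π := by
    rcases lt_or_eq_of_le (Complex.arg_le_pi μ) with h | h
    · exact h
    · exfalso
      have hs : Real.sin ψ = μ.im / ‖μ‖ := Complex.sin_arg μ
      have hpos : 0 < Real.sin ψ := by rw [hs]; positivity
      have : ψ = π := h
      rw [this] at hpos; simp at hpos
  set r := ‖z‖ with hr
  set α := Complex.arg z with hα
  have hrpos : 0 < r := norm_pos_iff.mpr hzne
  -- choose m and k
  set m : ℤ := ⌈(α + π/2) / (2*π)⌉ with hm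
  have hπ := Real.pi_pos
  have hαB : α ≤ 2*π*m - π/2 := by
    have h1 : (α + π/2) / (2*π) ≤ (m:ℝ) := Int.le_ceil _
    have h2 : α + π/2 ≤ (m:ℝ) * (2*π) := by
      have := (div_le_iff₀ (by positivity : (0:ℝ) < 2*π)).mp h1
      linarith
    linarith
  have hex : ∃ k : ℕ, 2*π*m - π/2 < k * ψ + α := by
    obtain ⟨k, hk⟩ := exists_nat_gt ((2*π*m - π/2 - α)/ψ)
    exact ⟨k, by nlinarith [(div_lt_iff₀ hψpos).mp hk]⟩
  set k₀ := Nat.find hex with hk₀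
  have hk₀spec : 2*π*m - π/2 < k₀ * ψ + α := Nat.find_spec hex
  have hk₀ne : k₀ ≠ 0 := by
    intro h
    rw [h] at hk₀spec; simp at hk₀spec; linarith
  have hk₀pred : ¬ (2*π*m - π/2 < (k₀ - 1 : ℕ) * ψ + α) :=
    Nat.find_min hex (Nat.sub_lt (Nat.pos_of_ne_zero hk₀ne) one_pos)
  push_neg at hk₀pred
  have hkk : (k₀ : ℝ) * ψ = ((k₀ - 1 : ℕ) : ℝ) * ψ + ψ := by
    have h1 : k₀ - 1 + 1 = k₀ := Nat.succ_pred_eq_of_pos (Nat.pos_of_ne_zero hk₀ne)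
    have h2 : ((k₀ - 1 + 1 : ℕ) : ℝ) = ((k₀ - 1 : ℕ) : ℝ) + 1 := by push_cast; ring
    rw [h1] at h2
    rw [h2]; ring
  have hub : k₀ * ψ + α < 2*π*m + π/2 := by
    rw [hkk]; linarith
  refine ⟨k₀, ?_⟩
  -- compute
  have hpolarμ : μ = (R : ℂ) * Complex.exp (ψ * Complex.I) := (Complex.norm_mul_exp_arg_mul_I μ).symm
  have hpolarz : z = (r : ℂ) * Complex.exp (α * Complex.I) := (Complex.norm_mul_exp_arg_mul_I z).symm
  have hFf : Ff ξ (μ ^ k₀ * w) = (μ ^ k₀ * z).re := by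
    rw [Ff_exp_re, hz]; ring_nf
  have hcompute : μ ^ k₀ * z = ((R ^ k₀ * r : ℝ) : ℂ) * Complex.exp ((k₀ * ψ + α : ℝ) * Complex.I) := by
    rw [hpolarμ, hpolarz, mul_pow, ← Complex.exp_nat_mul]
    rw [show ((k₀ * ψ + α : ℝ) : ℂ) * Complex.I = (k₀:ℂ) * (ψ * Complex.I) + (α:ℂ) * Complex.I by push_cast; ring]
    rw [Complex.exp_add]
    push_cast; ring
  rw [hFf, hcompute]
  rw [Complex.re_ofReal_mul, Complex.exp_ofReal_mul_I_re]
  have hcos : Real.cos (k₀ * ψ + α) = Real.cos (k₀ * ψ + α - m * (2*π)) :=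
    (Real.cos_sub_int_mul_two_pi _ m).symm
  have hmem : k₀ * ψ + α - m * (2*π) ∈ Set.Ioo (-(π/2)) (π/2) := by
    constructor <;> [linarith; linarith]
  have := Real.cos_pos_of_mem_Ioo hmem
  rw [hcos]
  positivity



lemma polar_id {P Q : ℝ} (hP : 0 < P) :
    Real.sqrt (P^2 + Q^2) * Real.cos (Real.arctan (Q/P)) = P ∧
    Real.sqrt (P^2 + Q^2) * Real.sin (Real.arctan (Q/P)) = Q := by
  have hs : 0 < Real.sqrt (P^2 + Q^2) := Real.sqrt_pos.mpr (by positivity)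
  have h1 : Real.sqrt (1 + (Q/P)^2) = Real.sqrt (P^2 + Q^2) / P := by
    rw [show 1 + (Q/P)^2 = (P^2 + Q^2) / P^2 by field_simp]
    rw [Real.sqrt_div (by positivity : (0:ℝ) ≤ P^2 + Q^2), Real.sqrt_sq hP.le]
  constructor
  · rw [Real.cos_arctan, h1]
    field_simp
  · rw [Real.sin_arctan, h1]
    field_simp

set_option maxHeartbeats 2000000 in
lemma cycle_contra (n M k : ℕ) (hn : 2 ≤ n) (hM : 1 ≤ M) (hk : 1 ≤ k) (hMn : M ≤ k * n)
    (τ : ℝ) (hτ : |τ| < π / n)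
    (p q q' L : ℕ → ℝ)
    (hp : ∀ j, j ≤ M → 0 < p j)
    (hqq : ∀ j, j < M → q j < q' j)
    (hstar : ∀ j, j < M → 0 ≤ q j * Real.cos τ + p j * Real.sin τ)
    (hL0 : ∀ j, j < M → 0 < L j) (hLπ : ∀ j, j < M → L j < π)
    (hrec1 : ∀ j, j < M → p (j+1) = p j * Real.cos (L j) + q' j * Real.sin (L j))
    (hrec2 : ∀ j, j < M → q (j+1) = q' j * Real.cos (L j) - p j * Real.sin (L j))
    (hpM : p M = p 0) (hqM : q M = q 0)
    (hsum : ∑ j ∈ range M, L j = 2*π*k) : False := by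
  have hπ := Real.pi_pos
  have hn0 : (0:ℝ) < n := by positivity
  have hπn2 : π / n ≤ π / 2 := by
    apply div_le_div_of_nonneg_left hπ.le (by norm_num)
    exact_mod_cast hn
  have hτ2 : |τ| < π / 2 := lt_of_lt_of_le hτ hπn2
  have hτl : -(π/2) < τ := by have := abs_lt.mp hτ2; linarith [this.1]
  have hτu : τ < π/2 := (abs_lt.mp hτ2).2
  have hcosτ : 0 < Real.cos τ := Real.cos_pos_of_mem_Ioo ⟨hτl, hτu⟩
  obtain ⟨A, hA⟩ : ∃ A : ℕ → ℝ, ∀ j, A j = Real.arctan (q j / p j) := ⟨_, fun _ => rfl⟩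
  obtain ⟨A', hA'⟩ : ∃ A' : ℕ → ℝ, ∀ j, A' j = Real.arctan (q' j / p j) := ⟨_, fun _ => rfl⟩
  obtain ⟨r, hrdef⟩ : ∃ r : ℕ → ℝ, ∀ j, r j = Real.sqrt (p j ^ 2 + q j ^ 2) := ⟨_, fun _ => rfl⟩
  obtain ⟨r', hr'def⟩ : ∃ r' : ℕ → ℝ, ∀ j, r' j = Real.sqrt (p j ^ 2 + q' j ^ 2) := ⟨_, fun _ => rfl⟩
  have hrpos : ∀ j, j ≤ M → 0 < r j := fun j hj => by
    rw [hrdef]; exact Real.sqrt_pos.mpr (by nlinarith [hp j hj])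
  have hr'pos : ∀ j, j < M → 0 < r' j := fun j hj => by
    rw [hr'def]; exact Real.sqrt_pos.mpr (by nlinarith [hp j hj.le])
  have hrc : ∀ j, j ≤ M → r j * Real.cos (A j) = p j := fun j hj => by
    rw [hrdef, hA]; exact (polar_id (hp j hj)).1
  have hrs : ∀ j, j ≤ M → r j * Real.sin (A j) = q j := fun j hj => by
    rw [hrdef, hA]; exact (polar_id (hp j hj)).2
  have hr'c : ∀ j, j < M → r' j * Real.cos (A' j) = p j := fun j hj => by
    rw [hr'def, hA']; exact (polar_id (hp j hj.le)).1
  have hr's : ∀ j, j < M → r' j * Real.sin (A' j) = q' j := fun j hj => by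
    rw [hr'def, hA']; exact (polar_id (hp j hj.le)).2
  have hAlo : ∀ j, -(π/2) < A j := fun j => by rw [hA]; exact Real.neg_pi_div_two_lt_arctan _
  have hAhi : ∀ j, A j < π/2 := fun j => by rw [hA]; exact Real.arctan_lt_pi_div_two _
  have hA'lo : ∀ j, -(π/2) < A' j := fun j => by rw [hA']; exact Real.neg_pi_div_two_lt_arctan _
  have hA'hi : ∀ j, A' j < π/2 := fun j => by rw [hA']; exact Real.arctan_lt_pi_div_two _
  -- step: r (j+1) = r' j
  have hrstep : ∀ j, j < M → r (j+1) = r' j := by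
    intro j hj
    rw [hrdef, hr'def]
    congr 1
    rw [hrec1 j hj, hrec2 j hj]
    linear_combination (p j^2 + q' j^2) * Real.sin_sq_add_cos_sq (L j)
  -- step: A (j+1) = A' j - L j
  have hAstep : ∀ j, j < M → A (j+1) = A' j - L j := by
    intro j hj
    have hpj1 := hp (j+1) (by omega)
    have hz : r' j * Real.cos (A' j - L j) = p (j+1) := by
      rw [Real.cos_sub, hrec1 j hj]
      have e : r' j * (Real.cos (A' j) * Real.cos (L j) + Real.sin (A' j) * Real.sin (L j))
          = (r' j * Real.cos (A' j)) * Real.cos (L j) + (r' j * Real.sin (A' j)) * Real.sin (L j) := by ring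
      rw [e, hr'c j hj, hr's j hj]
    have hz2 : r' j * Real.sin (A' j - L j) = q (j+1) := by
      rw [Real.sin_sub, hrec2 j hj]
      have e : r' j * (Real.sin (A' j) * Real.cos (L j) - Real.cos (A' j) * Real.sin (L j))
          = (r' j * Real.sin (A' j)) * Real.cos (L j) - (r' j * Real.cos (A' j)) * Real.sin (L j) := by ring
      rw [e, hr'c j hj, hr's j hj]
    have hcpos : 0 < Real.cos (A' j - L j) := by
      have h1 := hr'pos j hj
      nlinarith [hz, hpj1]
    have hrange1 : -(π/2) < A' j - L j := by
      by_contra h'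
      push_neg at h'
      have h2 : π/2 ≤ -(A' j - L j) := by linarith
      have h3 : -(A' j - L j) ≤ π + π/2 := by
        have := hA'lo j; have := hLπ j hj; linarith
      have := Real.cos_nonpos_of_pi_div_two_le_of_le h2 h3
      rw [Real.cos_neg] at this
      linarith
    have hrange2 : A' j - L j < π/2 := by
      have := hA'hi j; have := hL0 j hj; linarith
    have ht : Real.tan (A' j - L j) = q (j+1) / p (j+1) := by
      rw [Real.tan_eq_sin_div_cos, ← hz2, ← hz]
      rw [mul_div_mul_left _ _ (ne_of_gt (hr'pos j hj))]
    have harc := Real.arctan_tan hrange1 hrange2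
    rw [ht] at harc
    rw [hA, harc]
  -- G and x
  obtain ⟨G, hGeq⟩ : ∃ G : ℕ → ℝ, ∀ j, G j = A' j - A j := ⟨_, fun _ => rfl⟩
  obtain ⟨x, hxeq⟩ : ∃ x : ℕ → ℝ, ∀ j, x j = G j - τ := ⟨_, fun _ => rfl⟩
  have hGpos : ∀ j, j < M → 0 < G j := by
    intro j hj
    have h1 : A j < A' j := by
      rw [hA, hA']
      apply Real.arctan_strictMono
      exact (div_lt_div_iff_of_pos_right (hp j hj.le)).mpr (hqq j hj)
    rw [hGeq]
    linarith
  -- key per-switch inequality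
  have hkey : ∀ j, j < M → r j * Real.cos τ ≤ r' j * Real.cos (x j) := by
    intro j hj
    have hexp : r j * (r' j * Real.cos (A' j - (A j + τ))) =
        (r' j * Real.cos (A' j)) * (r j * Real.cos (A j)) * Real.cos τ
        - (r' j * Real.cos (A' j)) * (r j * Real.sin (A j)) * Real.sin τ
        + (r' j * Real.sin (A' j)) * (r j * Real.sin (A j)) * Real.cos τ
        + (r' j * Real.sin (A' j)) * (r j * Real.cos (A j)) * Real.sin τ := by
      rw [Real.cos_sub, Real.cos_add, Real.sin_add]; ring
    rw [hrc j hj.le, hrs j hj.le, hr'c j hj, hr's j hj] at hexp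
    have hxx : x j = A' j - (A j + τ) := by rw [hxeq, hGeq]; ring
    have hr2 : r j * r j = p j ^ 2 + q j ^ 2 := by
      rw [hrdef]; exact Real.mul_self_sqrt (by positivity)
    have hdiff : r j * (r' j * Real.cos (x j)) - r j * (r j * Real.cos τ)
        = (q' j - q j) * (q j * Real.cos τ + p j * Real.sin τ) := by
      rw [hxx, hexp]
      linear_combination (-(Real.cos τ)) * hr2
    have hge : 0 ≤ (q' j - q j) * (q j * Real.cos τ + p j * Real.sin τ) :=
      mul_nonneg (by linarith [hqq j hj]) (hstar j hj)
    have := hrpos j hj.le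
    nlinarith [hdiff, hge]
  -- cos (x j) positive, x j in range
  have hcosx : ∀ j, j < M → 0 < Real.cos (x j) := by
    intro j hj
    have h1 := hkey j hj
    have h2 := hrpos j hj.le
    have h3 := hr'pos j hj
    nlinarith
  have hxlo : ∀ j, j < M → -(π/2) < x j := by
    intro j hj
    have h1 := hGpos j hj
    rw [hxeq]; linarith
  have hxhi : ∀ j, j < M → x j < π/2 := by
    intro j hj
    by_contra h'
    push_neg at h'
    have hGub : G j < π := by
      rw [hGeq]; have := hA'hi j; have := hAlo j; linarith
    have h2 : x j ≤ π + π/2 := by rw [hxeq]; linarith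
    have := Real.cos_nonpos_of_pi_div_two_le_of_le h' h2
    linarith [hcosx j hj]
  -- product lower bound
  have hrMr0 : r M = r 0 := by rw [hrdef, hrdef, hpM, hqM]
  have htel : ∀ m, m ≤ M → ∏ j ∈ range m, (r j / r' j) = r 0 / r m := by
    intro m hm
    induction m with
    | zero =>
      rw [Finset.prod_range_zero, div_self (ne_of_gt (hrpos 0 (Nat.zero_le M)))]
    | succ i ih =>
      rw [Finset.prod_range_succ, ih (by omega), hrstep i (by omega)]
      have h1 := (hrpos i (by omega)).ne'
      have h2 := (hr'pos i (by omega)).ne'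
      field_simp
  have hprod_ge : Real.cos τ ^ M ≤ ∏ j ∈ range M, Real.cos (x j) := by
    have h1 : ∀ j ∈ range M, Real.cos τ * (r j / r' j) ≤ Real.cos (x j) := by
      intro j hj
      rw [Finset.mem_range] at hj
      have h2 := hkey j hj
      have h3 := hr'pos j hj
      have e : Real.cos τ * (r j / r' j) = (r j * Real.cos τ) / r' j := by ring
      rw [e, div_le_iff₀ h3]
      nlinarith [h2]
    have h0 : ∀ j ∈ range M, 0 ≤ Real.cos τ * (r j / r' j) := by
      intro j hj
      rw [Finset.mem_range] at hj
      have := hrpos j hj.le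
      have := hr'pos j hj
      positivity
    have hmain := Finset.prod_le_prod h0 h1
    have heq : ∏ j ∈ range M, (Real.cos τ * (r j / r' j)) = Real.cos τ ^ M * (r 0 / r M) := by
      rw [Finset.prod_mul_distrib, Finset.prod_const, Finset.card_range, htel M le_rfl]
    rw [heq, hrMr0] at hmain
    have : r 0 / r 0 = 1 := div_self (ne_of_gt (hrpos 0 (by omega)))
    rw [this, mul_one] at hmain
    exact hmain
  -- sum of x
  have hAM0 : A M = A 0 := by rw [hA, hA, hpM, hqM]
  have hsumG : ∑ j ∈ range M, G j = 2*π*k := by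
    have h1 : ∀ j ∈ range M, G j = (A (j+1) - A j) + L j := by
      intro j hj
      rw [Finset.mem_range] at hj
      rw [hAstep j hj, hGeq]
      ring
    rw [Finset.sum_congr rfl h1, Finset.sum_add_distrib, Finset.sum_range_sub, hAM0, hsum]
    ring
  have hsumx : ∑ j ∈ range M, x j = 2*π*k - M * τ := by
    have e : ∀ j ∈ range M, x j = G j - τ := fun j _ => hxeq j
    rw [Finset.sum_congr rfl e, Finset.sum_sub_distrib, hsumG, Finset.sum_const,
      Finset.card_range, nsmul_eq_mul]
  -- mean
  obtain ⟨m₀, hm₀⟩ : ∃ m : ℝ, m = (2*π*k)/M - τ := ⟨_, rfl⟩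
  have hMpos : (0:ℝ) < M := by exact_mod_cast hM
  have hmean : (∑ j ∈ range M, (M:ℝ)⁻¹ • x j) = m₀ := by
    rw [← Finset.smul_sum, hsumx, hm₀, smul_eq_mul]
    field_simp
  -- Jensen for cos
  have hconc := (strictConcaveOn_cos_Icc).concaveOn
  have hw0 : ∀ j ∈ range M, (0:ℝ) ≤ (M:ℝ)⁻¹ := fun j _ => by positivity
  have hw1 : ∑ j ∈ range M, (M:ℝ)⁻¹ = 1 := by
    rw [Finset.sum_const, Finset.card_range, nsmul_eq_mul]
    field_simp
  have hmem : ∀ j ∈ range M, x j ∈ Set.Icc (-(π/2)) (π/2) := by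
    intro j hj
    rw [Finset.mem_range] at hj
    exact ⟨(hxlo j hj).le, (hxhi j hj).le⟩
  have hjensen := hconc.le_map_sum hw0 hw1 hmem
  rw [hmean] at hjensen
  -- hjensen : ∑ M⁻¹ • cos (x j) ≤ cos m₀
  -- AM-GM
  have hy0 : ∀ j ∈ range M, (0:ℝ) ≤ Real.cos (x j) := by
    intro j hj; rw [Finset.mem_range] at hj; exact (hcosx j hj).le
  have hamgm := Real.geom_mean_le_arith_mean_weighted (range M) (fun _ => (M:ℝ)⁻¹)
    (fun j => Real.cos (x j)) hw0 hw1 hy0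
  -- raise to power M
  have hpow : ∏ j ∈ range M, Real.cos (x j)
      = (∏ j ∈ range M, Real.cos (x j) ^ ((M:ℝ)⁻¹)) ^ M := by
    rw [← Finset.prod_pow]
    apply Finset.prod_congr rfl
    intro j hj
    rw [Finset.mem_range] at hj
    rw [← Real.rpow_natCast (Real.cos (x j) ^ ((M:ℝ)⁻¹)) M, ← Real.rpow_mul (hcosx j hj).le]
    rw [inv_mul_cancel₀ (ne_of_gt hMpos), Real.rpow_one]
  have hbase0 : (0:ℝ) ≤ ∏ j ∈ range M, Real.cos (x j) ^ ((M:ℝ)⁻¹) := by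
    apply Finset.prod_nonneg
    intro j hj
    rw [Finset.mem_range] at hj
    exact Real.rpow_nonneg (hcosx j hj).le _
  have hchain1 : ∏ j ∈ range M, Real.cos (x j) ≤ (∑ j ∈ range M, (M:ℝ)⁻¹ * Real.cos (x j)) ^ M := by
    rw [hpow]
    exact pow_le_pow_left₀ hbase0 hamgm M
  -- bounds on m₀
  have hm₀hi : m₀ < π/2 := by
    have h1 : ∑ j ∈ range M, x j < ∑ j ∈ range M, (π/2 : ℝ) := by
      apply Finset.sum_lt_sum_of_nonempty
      · exact Finset.nonempty_range_iff.mpr (by omega)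
      · intro j hj; rw [Finset.mem_range] at hj; exact hxhi j hj
    rw [Finset.sum_const, Finset.card_range, nsmul_eq_mul, hsumx] at h1
    have e : m₀ = (2*π*k - M*τ)/M := by rw [hm₀]; field_simp
    rw [e, div_lt_iff₀ hMpos]
    nlinarith
  have hm₀lo : |τ| < m₀ := by
    have h1 : 2*π/n ≤ (2*π*k)/M := by
      rw [div_le_div_iff₀ hn0 hMpos]
      have h0 : (M:ℝ) ≤ (k:ℝ) * n := by exact_mod_cast hMn
      nlinarith
    have h2 : |τ| + τ ≤ 2 * |τ| := by
      rcases abs_cases τ with h | h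
      · rw [h.1]; linarith
      · rw [h.1]; linarith
    have h3 : 2 * |τ| < 2*π/n := by
      have e : 2*π/(n:ℝ) = 2*(π/n) := by ring
      rw [e]
      linarith
    rw [hm₀]
    linarith
  have hm₀pos : 0 < m₀ := lt_of_le_of_lt (abs_nonneg τ) hm₀lo
  have hcosm₀ : Real.cos m₀ < Real.cos |τ| := by
    apply Real.cos_lt_cos_of_nonneg_of_le_pi (abs_nonneg τ) (by linarith) hm₀lo
  have hcosm₀pos : 0 ≤ Real.cos m₀ :=
    (Real.cos_pos_of_mem_Ioo ⟨by linarith, hm₀hi⟩).le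
  have hsumy_le : ∑ j ∈ range M, (M:ℝ)⁻¹ * Real.cos (x j) ≤ Real.cos m₀ := by
    calc ∑ j ∈ range M, (M:ℝ)⁻¹ * Real.cos (x j)
        = ∑ j ∈ range M, (M:ℝ)⁻¹ • Real.cos (x j) := by simp [smul_eq_mul]
      _ ≤ Real.cos m₀ := hjensen
  have hsumy0 : 0 ≤ ∑ j ∈ range M, (M:ℝ)⁻¹ * Real.cos (x j) := by
    apply Finset.sum_nonneg
    intro j hj
    rw [Finset.mem_range] at hj
    have := (hcosx j hj).le
    positivity
  have hchain2 : (∑ j ∈ range M, (M:ℝ)⁻¹ * Real.cos (x j)) ^ M ≤ Real.cos m₀ ^ M :=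
    pow_le_pow_left₀ hsumy0 hsumy_le M
  have hchain3 : Real.cos m₀ ^ M < Real.cos |τ| ^ M :=
    pow_lt_pow_left₀ hcosm₀ hcosm₀pos (by omega)
  rw [Real.cos_abs] at hchain3
  linarith [hprod_ge, hchain1, hchain2, hchain3]

lemma sweep_exists (n : ℕ) (hn : 2 ≤ n) (v : Fin n → ℂ)
    (hpos : ∀ φ : ℝ, ∃ i, 0 < Ff φ (v i)) :
    ∃ (M kk : ℕ) (σ : ℕ → ℝ) (P : ℕ → ℂ),
      1 ≤ M ∧ M ≤ n ∧ 1 ≤ kk ∧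
      (∀ j : ℕ, ∃ i : Fin n, P j = v i ∧ ∀ i' : Fin n, Ff (σ j) (v i') ≤ Ff (σ j) (v i)) ∧
      (∀ j : ℕ, Ff (σ j) (P (j+1)) = Ff (σ j) (P j)) ∧
      (∀ j : ℕ, Gg (σ j) (P j) < Gg (σ j) (P (j+1))) ∧
      (∀ j : ℕ, 0 < σ (j+1) - σ j) ∧ (∀ j : ℕ, σ (j+1) - σ j < π) ∧
      P M = P 0 ∧ σ M = σ 0 + 2*π*kk := by
  classical
  have hπ := Real.pi_pos
  have hne : Nonempty (Fin n) := ⟨⟨0, by omega⟩⟩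
  obtain ⟨AM, hAM⟩ : ∃ AM : ℝ → Fin n → Prop,
      ∀ φ i, AM φ i ↔ ∀ j, Ff φ (v j) ≤ Ff φ (v i) := ⟨_, fun _ _ => Iff.rfl⟩
  -- positivity at argmax
  have hAMpos : ∀ φ i, AM φ i → 0 < Ff φ (v i) := by
    intro φ i h
    obtain ⟨j, hj⟩ := hpos φ
    exact lt_of_lt_of_le hj ((hAM φ i).mp h j)
  -- periodicity of AM
  have hAMper : ∀ φ (k : ℤ) i, AM (φ + 2*π*k) i ↔ AM φ i := by
    intro φ k i
    rw [hAM, hAM]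
    constructor <;> intro h j
    · have := h j; rwa [Ff_periodic, Ff_periodic] at this
    · rw [Ff_periodic, Ff_periodic]; exact h j
  -- existence of argmax maximizing Gg
  have hnext_ex : ∀ φ : ℝ, ∃ i, AM φ i ∧ ∀ j, AM φ j → Gg φ (v j) ≤ Gg φ (v i) := by
    intro φ
    obtain ⟨i₀, -, hi₀⟩ := Finset.exists_max_image Finset.univ (fun i => Ff φ (v i))
      ⟨Classical.arbitrary _, Finset.mem_univ _⟩
    have hi₀AM : AM φ i₀ := (hAM φ i₀).mpr (fun j => hi₀ j (Finset.mem_univ j))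
    obtain ⟨i, hiS, hi⟩ := Finset.exists_max_image (Finset.univ.filter (fun j => AM φ j))
      (fun j => Gg φ (v j)) ⟨i₀, Finset.mem_filter.mpr ⟨Finset.mem_univ _, hi₀AM⟩⟩
    refine ⟨i, (Finset.mem_filter.mp hiS).2, ?_⟩
    intro j hj
    exact hi j (Finset.mem_filter.mpr ⟨Finset.mem_univ _, hj⟩)
  choose next hnextAM hnextG using hnext_ex
  -- region end
  obtain ⟨E, hE⟩ : ∃ E : ℝ → Fin n → ℝ, ∀ φ i,
      E φ i = sSup {ψ : ℝ | ψ ∈ Set.Icc φ (φ + π) ∧ ∀ ξ ∈ Set.Icc φ ψ, AM ξ i} :=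
    ⟨_, fun _ _ => rfl⟩
  -- basic facts about E, for AM φ i
  have hSSmem : ∀ φ i, AM φ i → φ ∈ {ψ : ℝ | ψ ∈ Set.Icc φ (φ + π) ∧ ∀ ξ ∈ Set.Icc φ ψ, AM ξ i} := by
    intro φ i h
    refine ⟨⟨le_refl _, by linarith⟩, ?_⟩
    intro ξ hξ
    have : ξ = φ := le_antisymm hξ.2 hξ.1
    rwa [this]
  have hSSbdd : ∀ φ i, BddAbove {ψ : ℝ | ψ ∈ Set.Icc φ (φ + π) ∧ ∀ ξ ∈ Set.Icc φ ψ, AM ξ i} :=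
    fun φ i => ⟨φ + π, fun ψ hψ => hψ.1.2⟩
  have hE1 : ∀ φ i, AM φ i → φ ≤ E φ i := by
    intro φ i h
    rw [hE]
    exact le_csSup (hSSbdd φ i) (hSSmem φ i h)
  have hE2 : ∀ φ i, AM φ i → E φ i ≤ φ + π := by
    intro φ i h
    rw [hE]
    exact csSup_le ⟨φ, hSSmem φ i h⟩ (fun ψ hψ => hψ.1.2)
  have hE4 : ∀ φ i, AM φ i → ∀ ξ, φ ≤ ξ → ξ < E φ i → AM ξ i := by
    intro φ i h ξ h1 h2
    rw [hE] at h2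
    obtain ⟨ψ, hψ, hlt⟩ := exists_lt_of_lt_csSup ⟨φ, hSSmem φ i h⟩ h2
    exact hψ.2 ξ ⟨h1, hlt.le⟩
  have hE5 : ∀ φ i, AM φ i → AM (E φ i) i := by
    intro φ i h
    rcases eq_or_lt_of_le (hE1 φ i h) with heq | hlt
    · rwa [← heq]
    · have hC : IsClosed {ξ : ℝ | AM ξ i} := by
        have hset : {ξ : ℝ | AM ξ i} = ⋂ j, {ξ : ℝ | Ff ξ (v j) ≤ Ff ξ (v i)} := by
          ext ξ
          simp only [Set.mem_setOf_eq, Set.mem_iInter, hAM]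
        rw [hset]
        exact isClosed_iInter (fun j => isClosed_le (continuous_Ff _) (continuous_Ff _))
      have hsub : Set.Ico φ (E φ i) ⊆ {ξ : ℝ | AM ξ i} := fun ξ hξ => hE4 φ i h ξ hξ.1 hξ.2
      have hmem : E φ i ∈ closure (Set.Ico φ (E φ i)) := by
        rw [closure_Ico (ne_of_lt hlt)]
        exact ⟨hlt.le, le_refl _⟩
      exact (closure_minimal hsub hC) hmem
  have hE7 : ∀ φ i, AM φ i → E φ i < φ + π := by
    intro φ i h
    rcases lt_or_eq_of_le (hE2 φ i h) with hlt | heq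
    · exact hlt
    · exfalso
      have h1 := hAMpos φ i h
      have h2 := hAMpos _ i (heq ▸ hE5 φ i h)
      rw [Ff_pi] at h2
      linarith
  have hE8 : ∀ φ i, AM φ i → ∀ ψ, E φ i < ψ → ∃ ξ, E φ i < ξ ∧ ξ ≤ ψ ∧ ¬ AM ξ i := by
    intro φ i h ψ hψ
    set ξ0 := min ψ ((E φ i + (φ + π))/2) with hξ0
    have hE7' := hE7 φ i h
    have h1 : E φ i < ξ0 := lt_min hψ (by linarith)
    have h2 : ξ0 ≤ φ + π := le_trans (min_le_right _ _) (by linarith)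
    have h3 : ξ0 ∉ {ψ : ℝ | ψ ∈ Set.Icc φ (φ + π) ∧ ∀ ξ ∈ Set.Icc φ ψ, AM ξ i} := by
      intro hmem
      have := le_csSup (hSSbdd φ i) hmem
      rw [← hE] at this
      linarith
    have h4 : ξ0 ∈ Set.Icc φ (φ + π) := ⟨le_trans (hE1 φ i h) h1.le, h2⟩
    have h5 : ¬ ∀ ξ ∈ Set.Icc φ ξ0, AM ξ i := fun hc => h3 ⟨h4, hc⟩
    push_neg at h5
    obtain ⟨ξ, hξmem, hξnot⟩ := h5
    refine ⟨ξ, ?_, le_trans hξmem.2 (min_le_left _ _), hξnot⟩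
    by_contra hle
    push_neg at hle
    rcases lt_or_eq_of_le hle with hlt | heq
    · exact hξnot (hE4 φ i h ξ hξmem.1 hlt)
    · exact hξnot (heq ▸ hE5 φ i h)
  -- strict advance
  have hE6 : ∀ φ, φ < E φ (next φ) := by
    intro φ
    set i := next φ with hidef
    have hAMi := hnextAM φ
    -- per-index epsilon
    have hjeps : ∀ j : Fin n, ∃ ε : ℝ, 0 < ε ∧ ε ≤ π/2 ∧
        ∀ Δ, 0 ≤ Δ → Δ ≤ ε → Ff (φ + Δ) (v j) ≤ Ff (φ + Δ) (v i) := by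
      intro j
      have hc : 0 ≤ Ff φ (v i) - Ff φ (v j) := by
        have := (hAM φ i).mp hAMi j
        linarith
      set c := Ff φ (v i) - Ff φ (v j) with hcdef
      set D := Gg φ (v j) - Gg φ (v i) with hDdef
      have hkey : ∀ Δ, Ff (φ + Δ) (v i) - Ff (φ + Δ) (v j)
          = Real.cos Δ * c - Real.sin Δ * D := by
        intro Δ
        rw [Ff_add_angle, Ff_add_angle]
        simp only [hcdef, hDdef]
        ring
      rcases le_or_gt D 0 with hD | hD
      · refine ⟨π/2, by linarith, le_refl _, ?_⟩
        intro Δ h0 h1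
        have hcos : 0 ≤ Real.cos Δ := Real.cos_nonneg_of_mem_Icc ⟨by linarith, h1⟩
        have hsin : 0 ≤ Real.sin Δ := Real.sin_nonneg_of_nonneg_of_le_pi h0 (by linarith)
        nlinarith [hkey Δ]
      · -- D > 0 forces c > 0
        have hcpos : 0 < c := by
          rcases lt_or_eq_of_le hc with h | h
          · exact h
          · exfalso
            have hAMj : AM φ j := by
              rw [hAM]
              intro j'
              have := (hAM φ i).mp hAMi j'
              simp only [hcdef] at h
              linarith
            have := hnextG φ j hAMj
            rw [← hidef] at this
            simp only [hDdef] at hD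
            linarith
        have harcpos : 0 < Real.arctan (c / D) := by
          rw [← Real.arctan_zero]
          exact Real.arctan_strictMono (by positivity)
        refine ⟨Real.arctan (c / D), harcpos, (Real.arctan_lt_pi_div_two _).le, ?_⟩
        intro Δ h0 h1
        have hΔlt : Δ < π/2 := lt_of_le_of_lt h1 (Real.arctan_lt_pi_div_two _)
        have hcos : 0 < Real.cos Δ := Real.cos_pos_of_mem_Ioo ⟨by linarith, hΔlt⟩
        have htan : Real.tan Δ ≤ c / D := by
          have h2 : Real.tan Δ ≤ Real.tan (Real.arctan (c/D)) := by
            rcases lt_or_eq_of_le h1 with hlt | heq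
            · exact (Real.strictMonoOn_tan ⟨by linarith, hΔlt⟩
                ⟨Real.neg_pi_div_two_lt_arctan _, Real.arctan_lt_pi_div_two _⟩ hlt).le
            · rw [heq]
          rwa [Real.tan_arctan] at h2
        have : Real.sin Δ * D ≤ c * Real.cos Δ := by
          rw [Real.tan_eq_sin_div_cos, div_le_div_iff₀ hcos (by positivity)] at htan
          nlinarith
        nlinarith [hkey Δ]
    choose εf hεf0 hεf2 hεf using hjeps
    obtain ⟨ε, hε0, hε2, hεall⟩ : ∃ ε : ℝ, 0 < ε ∧ ε ≤ π/2 ∧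
        ∀ j Δ, 0 ≤ Δ → Δ ≤ ε → Ff (φ + Δ) (v j) ≤ Ff (φ + Δ) (v i) := by
      refine ⟨Finset.univ.inf' Finset.univ_nonempty εf, ?_, ?_, ?_⟩
      · rw [Finset.lt_inf'_iff]
        exact fun j _ => hεf0 j
      · exact le_trans (Finset.inf'_le _ (Finset.mem_univ i)) (hεf2 i)
      · intro j Δ h0 h1
        exact hεf j Δ h0 (le_trans h1 (Finset.inf'_le _ (Finset.mem_univ j)))
    have hmem : φ + ε ∈ {ψ : ℝ | ψ ∈ Set.Icc φ (φ + π) ∧ ∀ ξ ∈ Set.Icc φ ψ, AM ξ i} := by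
      refine ⟨⟨by linarith, by linarith⟩, ?_⟩
      intro ξ hξ
      rw [hAM]
      intro j
      have h1 : ξ = φ + (ξ - φ) := by ring
      rw [h1]
      exact hεall j (ξ - φ) (by linarith [hξ.1]) (by linarith [hξ.2])
    have := le_csSup (hSSbdd φ i) hmem
    rw [← hE] at this
    linarith
  -- the sweep sequence
  obtain ⟨s, hs0, hsstep⟩ : ∃ s : ℕ → ℝ, s 0 = 0 ∧ ∀ t, s (t+1) = E (s t) (next (s t)) :=
    ⟨fun t => (fun φ => E φ (next φ))^[t] 0, rfl, fun t => Function.iterate_succ_apply' _ _ _⟩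
  have arcAM : ∀ t : ℕ, AM (s t) (next (s t)) := fun t => hnextAM _
  have arclt : ∀ t : ℕ, s t < s (t+1) := fun t => by rw [hsstep]; exact hE6 (s t)
  have arcpi : ∀ t : ℕ, s (t+1) < s t + π := fun t => by
    rw [hsstep]; exact hE7 _ _ (arcAM t)
  have arcIcc : ∀ t : ℕ, ∀ ξ, s t ≤ ξ → ξ ≤ s (t+1) → AM ξ (next (s t)) := by
    intro t ξ h1 h2
    rw [hsstep] at h2
    rcases lt_or_eq_of_le h2 with hlt | heq
    · exact hE4 _ _ (arcAM t) ξ h1 hlt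
    · rw [heq]; exact hE5 _ _ (arcAM t)
  have arcfail : ∀ t : ℕ, ∀ ψ, s (t+1) < ψ → ∃ ξ, s (t+1) < ξ ∧ ξ ≤ ψ ∧ ¬ AM ξ (next (s t)) := by
    intro t ψ hψ
    rw [hsstep] at hψ ⊢
    exact hE8 _ _ (arcAM t) ψ hψ
  have smono : StrictMono s := strictMono_nat_of_lt_succ arclt
  -- value-based AM
  have hAMval : ∀ ξ (i i' : Fin n), v i = v i' → (AM ξ i ↔ AM ξ i') := by
    intro ξ i i' hvv
    rw [hAM, hAM, hvv]
  -- consecutive arcs have distinct values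
  have hdist : ∀ τ : ℕ, v (next (s (τ+1))) ≠ v (next (s τ)) := by
    intro τ heqv
    obtain ⟨ξ, h1, h2, h3⟩ := arcfail τ (s (τ+2)) (arclt (τ+1))
    apply h3
    rw [hAMval ξ (next (s τ)) (next (s (τ+1))) heqv.symm]
    exact arcIcc (τ+1) ξ h1.le h2
  -- class lemma
  have classlem : ∀ t t' : ℕ, t < t' → v (next (s t)) = v (next (s t')) →
      ∃ kk : ℕ, 1 ≤ kk ∧ s (t'+1) = s (t+1) + 2*π*kk := by
    intro t t' htt hvv
    have hxy : s (t+1) < s (t'+1) := smono (by omega)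
    have hAMx : AM (s (t+1)) (next (s t)) := arcIcc t _ (arclt t).le le_rfl
    have hAMy' : AM (s (t'+1)) (next (s t')) := arcIcc t' _ (arclt t').le le_rfl
    have hAMy : AM (s (t'+1)) (next (s t)) :=
      (hAMval _ (next (s t)) (next (s t')) hvv).mpr hAMy'
    set x := s (t+1) with hxdef
    set y := s (t'+1) with hydef
    set i := next (s t) with hidef
    set K : ℤ := ⌊(y - x)/(2*π)⌋ with hK
    have h2π : (0:ℝ) < 2*π := by linarith
    have hKle : (K:ℝ) ≤ (y - x)/(2*π) := Int.floor_le _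
    have hKgt : (y - x)/(2*π) < K + 1 := Int.lt_floor_add_one _
    have hc0 : 0 ≤ y - x - 2*π*K := by
      have h := (le_div_iff₀ h2π).mp hKle
      linarith
    have hc2 : y - x - 2*π*K < 2*π := by
      have h := (div_lt_iff₀ h2π).mp hKgt
      nlinarith
    have hKpos : 0 ≤ K := by
      by_contra hneg
      push_neg at hneg
      have : (K:ℝ) ≤ -1 := by exact_mod_cast Int.le_sub_one_of_lt hneg
      nlinarith
    set c := y - x - 2*π*K with hc
    have hshift : AM (x + c) i := by
      have he : x + c = y + 2*π*(-K : ℤ) := by push_cast; ring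
      rw [he, hAMper]
      exact hAMy
    -- interpolation helper
    have hinterp : ∀ (x₀ cc : ℝ) (i₀ : Fin n), 0 < cc → cc < π → AM x₀ i₀ → AM (x₀ + cc) i₀ →
        ∀ A, 0 < A → A < cc → AM (x₀ + A) i₀ := by
      intro x₀ cc i₀ hcc0 hccπ h0 h1 A hA0 hA1
      rw [hAM]; intro j
      have hsc : 0 < Real.sin cc := Real.sin_pos_of_pos_of_lt_pi hcc0 hccπ
      have hscA : 0 ≤ Real.sin (cc - A) :=
        Real.sin_nonneg_of_nonneg_of_le_pi (by linarith) (by linarith)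
      have hsA : 0 ≤ Real.sin A := Real.sin_nonneg_of_nonneg_of_le_pi hA0.le (by linarith)
      have e1 := Ff_interp x₀ cc A (v j)
      have e2 := Ff_interp x₀ cc A (v i₀)
      have b1 := (hAM _ _).mp h0 j
      have b2 := (hAM _ _).mp h1 j
      have hmul : Ff (x₀+A) (v j) * Real.sin cc ≤ Ff (x₀+A) (v i₀) * Real.sin cc := by
        rw [e1, e2]; nlinarith
      exact le_of_mul_le_mul_right hmul hsc
    rcases lt_trichotomy c π with hcπ | hcπ | hcπ
    · rcases eq_or_lt_of_le hc0 with hceq | hcpos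
      · -- c = 0 : conclude
        have hKpos1 : 1 ≤ K := by
          rcases eq_or_lt_of_le hKpos with h0 | h0
          · exfalso; rw [hc] at hceq; rw [← h0] at hceq; push_cast at hceq; nlinarith
          · omega
        refine ⟨K.toNat, by omega, ?_⟩
        have he : ((K.toNat : ℕ) : ℝ) = (K : ℝ) := by
          exact_mod_cast congrArg (Int.cast : ℤ → ℝ) (Int.toNat_of_nonneg hKpos)
        rw [he]
        rw [hc] at hceq
        linarith
      · exfalso
        obtain ⟨ξ, h1, h2, h3⟩ := arcfail t (x + c/2) (by linarith)
        apply h3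
        have he : ξ = x + (ξ - x) := by ring
        rw [← hidef, he]
        exact hinterp x c i hcpos hcπ hAMx hshift (ξ - x) (by linarith) (by linarith)
    · exfalso
      have p1 := hAMpos x i hAMx
      have p2 := hAMpos _ i hshift
      rw [hcπ, Ff_pi] at p2
      linarith
    · exfalso
      have hAM2π : AM (x + 2*π) i := by
        have he : x + 2*π = x + 2*π*((1:ℤ):ℝ) := by push_cast; ring
        rw [he, hAMper]
        exact hAMx
      obtain ⟨ξ', h1, h2, h3⟩ := arcfail t' (y + (2*π - c)/2) (by linarith)
      have h3' : ¬ AM ξ' i := fun hcon => h3 ((hAMval ξ' i (next (s t')) hvv).mp hcon)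
      have hξnot : ¬ AM (ξ' + 2*π*((-K : ℤ):ℝ)) i := by
        rw [hAMper]; exact h3'
      apply hξnot
      have he2 : ξ' + 2*π*((-K:ℤ):ℝ) = (x + c) + ((ξ' - 2*π*K) - (x + c)) := by push_cast; ring
      rw [he2]
      have he3 : AM ((x+c) + (2*π - c)) i := by
        have : (x+c) + (2*π - c) = x + 2*π := by ring
        rw [this]; exact hAM2π
      apply hinterp (x+c) (2*π - c) i (by linarith) (by linarith) hshift he3
      · push_cast; rw [hc]; push_cast; linarith
      · push_cast; rw [hc]; push_cast; linarith
  -- pigeonhole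
  have hmaps : ∀ t ∈ Finset.range (n+1), v (next (s t)) ∈ Finset.univ.image v :=
    fun t _ => Finset.mem_image_of_mem v (Finset.mem_univ _)
  have hcard : (Finset.univ.image v).card < (Finset.range (n+1)).card := by
    rw [Finset.card_range]
    calc (Finset.univ.image v).card ≤ (Finset.univ : Finset (Fin n)).card := Finset.card_image_le
      _ = n := by simp
      _ < n + 1 := by omega
  obtain ⟨a, ha, b, hb, hab, hvab⟩ :=
    Finset.exists_ne_map_eq_of_card_lt_of_maps_to hcard hmaps
  rw [Finset.mem_range] at ha hb
  -- wlog a < b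
  obtain ⟨t, t', htt', htn, hvv⟩ : ∃ t t' : ℕ, t < t' ∧ t' ≤ n ∧
      v (next (s t)) = v (next (s t')) := by
    rcases lt_or_gt_of_ne hab with h | h
    · exact ⟨a, b, h, by omega, hvab⟩
    · exact ⟨b, a, h, by omega, hvab.symm⟩
  obtain ⟨kk, hkk1, hkky⟩ := classlem t t' htt' hvv
  obtain ⟨σ, hσ⟩ : ∃ σ : ℕ → ℝ, ∀ j, σ j = s (t+1+j) := ⟨_, fun _ => rfl⟩
  obtain ⟨P, hP⟩ : ∃ P : ℕ → ℂ, ∀ j, P j = v (next (s (t+j))) := ⟨_, fun _ => rfl⟩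
  refine ⟨t' - t, kk, σ, P, by omega, by omega, hkk1,
    ?_, ?_, ?_, ?_, ?_, ?_, ?_⟩
  · -- argmax of incoming
    intro j
    refine ⟨next (s (t+j)), hP j, ?_⟩
    have he : t+1+j = (t+j)+1 := by omega
    rw [hσ, he]
    have hAMin : AM (s ((t+j)+1)) (next (s (t+j))) := arcIcc (t+j) _ (arclt (t+j)).le le_rfl
    exact (hAM _ _).mp hAMin
  · -- Ff equality at switch
    intro j
    have he : t+1+j = (t+j)+1 := by omega
    have he2 : t+(j+1) = (t+j)+1 := by omega
    rw [hσ, hP, hP, he, he2]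
    have hAMin : AM (s ((t+j)+1)) (next (s (t+j))) := arcIcc (t+j) _ (arclt (t+j)).le le_rfl
    have hAMout : AM (s ((t+j)+1)) (next (s ((t+j)+1))) := arcAM _
    exact le_antisymm ((hAM _ _).mp hAMin _) ((hAM _ _).mp hAMout _)
  · -- Gg strict
    intro j
    have he : t+1+j = (t+j)+1 := by omega
    have he2 : t+(j+1) = (t+j)+1 := by omega
    rw [hσ, hP, hP, he, he2]
    have hAMin : AM (s ((t+j)+1)) (next (s (t+j))) := arcIcc (t+j) _ (arclt (t+j)).le le_rfl
    have hle : Gg (s ((t+j)+1)) (v (next (s (t+j)))) ≤ Gg (s ((t+j)+1)) (v (next (s ((t+j)+1)))) :=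
      hnextG _ _ hAMin
    rcases lt_or_eq_of_le hle with h | h
    · exact h
    · exfalso
      have hAMout : AM (s ((t+j)+1)) (next (s ((t+j)+1))) := arcAM _
      have hFfeq : Ff (s ((t+j)+1)) (v (next (s (t+j)))) = Ff (s ((t+j)+1)) (v (next (s ((t+j)+1)))) :=
        le_antisymm ((hAM _ _).mp hAMout _) ((hAM _ _).mp hAMin _)
      exact hdist (t+j) (Ff_Gg_inj _ hFfeq.symm h.symm)
  · -- positive arc length
    intro j
    have he : t+1+(j+1) = (t+1+j)+1 := by omega
    rw [hσ, hσ, he]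
    linarith [arclt (t+1+j)]
  · -- arc length < π
    intro j
    have he : t+1+(j+1) = (t+1+j)+1 := by omega
    rw [hσ, hσ, he]
    linarith [arcpi (t+1+j)]
  · -- P M = P 0
    have he : t + (t' - t) = t' := by omega
    rw [hP, hP, he]
    simp only [Nat.add_zero]
    exact hvv.symm
  · -- σ M = σ 0 + 2πk
    have he : t + 1 + (t' - t) = t' + 1 := by omega
    have he2 : t + 1 + 0 = t + 1 := by omega
    rw [hσ, hσ, he, he2]
    exact hkky

set_option maxHeartbeats 2000000 in
lemma core (n : ℕ) (hn : 2 ≤ n) (l : ℂ) (him : 0 < l.im)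
    (b : Fin n → Fin n → ℝ) (hboff : ∀ i j : Fin n, i ≠ j → 0 ≤ b i j)
    (hbrow : ∀ i : Fin n, ∑ j, b i j = 0)
    (v : Fin n → ℂ) (hv : ∃ i, v i ≠ 0)
    (heig : ∀ i : Fin n, l * v i = ∑ j, ((b i j : ℝ) : ℂ) * v j)
    (hcon : Real.cot (π / n) * |l.re| < l.im) : False := by
  classical
  have hπ := Real.pi_pos
  have hn0 : (0:ℝ) < n := by positivity
  -- Step A : positivity of the support function
  have hpos : ∀ φ : ℝ, ∃ i, 0 < Ff φ (v i) := by
    intro φ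
    by_contra hcontra
    push_neg at hcontra
    set a : ℝ := 1 + ∑ i, ∑ j, |b i j| with ha
    have ha1 : 1 ≤ a := by
      have : 0 ≤ ∑ i, ∑ j, |b i j| :=
        Finset.sum_nonneg (fun i _ => Finset.sum_nonneg (fun j _ => abs_nonneg _))
      linarith
    have ha0 : 0 < a := by linarith
    have habs : ∀ i j : Fin n, |b i j| ≤ a - 1 := by
      intro i j
      have h1 : |b i j| ≤ ∑ j', |b i j'| :=
        Finset.single_le_sum (f := fun j' => |b i j'|) (fun _ _ => abs_nonneg _) (Finset.mem_univ j)
      have h2 : ∑ j', |b i j'| ≤ ∑ i', ∑ j', |b i' j'| :=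
        Finset.single_le_sum (f := fun i' => ∑ j', |b i' j'|)
          (fun _ _ => Finset.sum_nonneg (fun _ _ => abs_nonneg _)) (Finset.mem_univ i)
      have h3 : a - 1 = ∑ i', ∑ j', |b i' j'| := by rw [ha]; ring
      linarith
    set S : Fin n → Fin n → ℝ := fun i j => (if i = j then 1 else 0) + b i j / a with hS
    have hS0 : ∀ i j, 0 ≤ S i j := by
      intro i j
      simp only [hS]
      by_cases hij : i = j
      · rw [if_pos hij]
        have h1 := (abs_le.mp (habs i j)).1
        have h2 : 0 ≤ (a + b i j)/a := div_nonneg (by linarith) ha0.le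
        have h3 : (a + b i j)/a = 1 + b i j/a := by field_simp
        linarith
      · rw [if_neg hij]
        have := hboff i j hij
        positivity
    have hSrow : ∀ i, ∑ j, S i j = 1 := by
      intro i
      simp only [hS]
      rw [Finset.sum_add_distrib]
      have h1 : ∑ j, (if i = j then (1:ℝ) else 0) = 1 := by
        rw [Finset.sum_ite_eq]
        simp
      have h2 : ∑ j, b i j / a = (∑ j, b i j) / a := by rw [Finset.sum_div]
      rw [h1, h2, hbrow i]
      simp
    set μ : ℂ := 1 + ((a⁻¹ : ℝ) : ℂ) * l with hμ
    have hμim : 0 < μ.im := by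
      rw [hμ]
      simp only [Complex.add_im, Complex.one_im, Complex.mul_im, Complex.ofReal_re,
        Complex.ofReal_im]
      have : 0 < a⁻¹ * l.im := by positivity
      linarith
    have hSeig : ∀ i, ∑ j, ((S i j : ℝ) : ℂ) * v j = μ * v i := by
      intro i
      have e1 : ∀ j : Fin n, ((S i j : ℝ):ℂ) = (if i = j then (1:ℂ) else 0)
          + ((a:ℝ):ℂ)⁻¹ * ((b i j : ℝ):ℂ) := by
        intro j
        simp only [hS]
        push_cast
        split_ifs <;> · field_simp <;> simp
      calc ∑ j, ((S i j:ℝ):ℂ) * v j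
          = ∑ j, ((if i = j then (1:ℂ) else 0) * v j + ((a:ℝ):ℂ)⁻¹ * (((b i j:ℝ):ℂ) * v j)) := by
            apply Finset.sum_congr rfl; intro j _; rw [e1 j]; ring
        _ = (∑ j, (if i = j then (1:ℂ) else 0) * v j)
            + ((a:ℝ):ℂ)⁻¹ * ∑ j, ((b i j:ℝ):ℂ) * v j := by
            rw [Finset.sum_add_distrib, Finset.mul_sum]
        _ = v i + ((a:ℝ):ℂ)⁻¹ * (l * v i) := by
            rw [← heig i]
            congr 1
            have h1 : ∑ j, (if i = j then (1:ℂ) else 0) * v j = v i := by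
              simp [ite_mul]
            rw [h1]
        _ = μ * v i := by
            rw [hμ]
            push_cast
            ring
    have horb : ∀ k : ℕ, ∀ i, μ^k * v i ∈ convexHull ℝ (Set.range v) := by
      intro k
      induction k with
      | zero =>
        intro i
        rw [pow_zero, one_mul]
        exact subset_convexHull ℝ _ ⟨i, rfl⟩
      | succ k ih =>
        intro i
        have hexp : μ^(k+1) * v i = ∑ j, S i j • (μ^k * v j) := by
          have e0 : ∑ j, S i j • (μ^k * v j) = ∑ j, ((S i j:ℝ):ℂ) * (μ^k * v j) := by
            apply Finset.sum_congr rfl; intro j _; rw [Complex.real_smul]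
          have e2 : ∑ j, ((S i j:ℝ):ℂ) * (μ^k * v j) = μ^k * ∑ j, ((S i j:ℝ):ℂ) * v j := by
            rw [Finset.mul_sum]; apply Finset.sum_congr rfl; intro j _; ring
          rw [e0, e2, hSeig i]; ring
        rw [hexp]
        exact (convex_convexHull ℝ _).sum_mem (fun j _ => hS0 i j) (hSrow i) (fun j _ => ih j)
    have hhalf : convexHull ℝ (Set.range v) ⊆ {z : ℂ | Ff φ z ≤ 0} := by
      apply convexHull_min
      · rintro z ⟨i, rfl⟩
        exact hcontra i
      · have hlin : IsLinearMap ℝ (fun z : ℂ => Ff φ z) := by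
          constructor
          · intro z w; simp [Ff]; ring
          · intro c z
            rw [Complex.real_smul]
            simp [Ff, Complex.mul_re, Complex.mul_im]
            ring
        exact convex_halfSpace_le hlin 0
    obtain ⟨i₀, hi₀⟩ := hv
    obtain ⟨k, hk⟩ := rotation_hits φ (v i₀) hi₀ μ hμim
    have hmem := hhalf (horb k i₀)
    simp only [Set.mem_setOf_eq] at hmem
    linarith
  -- Step B : the support inequality at argmax points
  have hstar0 : ∀ (φ : ℝ) (i : Fin n), (∀ j, Ff φ (v j) ≤ Ff φ (v i)) → Ff φ (l * v i) ≤ 0 := by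
    intro φ i hmax
    have hrel : l * v i = ∑ j, ((b i j:ℝ):ℂ) * (v j - v i) := by
      have e1 : ∑ j, ((b i j:ℝ):ℂ) * (v j - v i)
          = (∑ j, ((b i j:ℝ):ℂ) * v j) - (∑ j, ((b i j:ℝ):ℂ)) * v i := by
        rw [Finset.sum_mul, ← Finset.sum_sub_distrib]
        apply Finset.sum_congr rfl
        intro j _
        ring
      have e2 : (∑ j, ((b i j:ℝ):ℂ)) = 0 := by
        have : ((∑ j, b i j : ℝ) : ℂ) = ∑ j, ((b i j:ℝ):ℂ) := by push_cast; rfl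
        rw [← this, hbrow i]
        simp
      rw [e1, e2, zero_mul, sub_zero, heig i]
    rw [hrel, Ff_sum]
    apply Finset.sum_nonpos
    intro j _
    rw [Ff_real_mul, Ff_sub]
    by_cases hij : j = i
    · rw [hij]; simp
    · have h1 := hboff i j (fun h => hij h.symm)
      have h2 := hmax j
      nlinarith
  -- Step C : the angle τ
  set κ : ℝ := -(l.re / l.im) with hκ
  set τ : ℝ := Real.arctan κ with hτdef
  have hτabs : |τ| = Real.arctan |κ| := by
    rcases le_or_gt 0 κ with h | h
    · rw [abs_of_nonneg h, hτdef, abs_of_nonneg]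
      rw [← Real.arctan_zero]
      exact Real.arctan_strictMono.monotone h
    · rw [abs_of_neg h, hτdef, abs_of_neg, ← Real.arctan_neg]
      rw [← Real.arctan_zero]
      exact Real.arctan_strictMono h
  have hτn : |τ| < π / n := by
    rcases eq_or_lt_of_le hn with h2 | h3
    · rw [← h2]
      push_cast
      rw [hτabs]
      calc Real.arctan |κ| < π/2 := Real.arctan_lt_pi_div_two _
        _ = π / 2 := rfl
    · have hn3 : (3:ℝ) ≤ n := by exact_mod_cast h3
      have hππ : π/n < π/2 := by
        rw [div_lt_div_iff₀ hn0 (by norm_num)]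
        nlinarith
      have hπP : 0 < π/n := by positivity
      have hsin : 0 < Real.sin (π/n) :=
        Real.sin_pos_of_pos_of_lt_pi hπP (by linarith)
      have hcos : 0 < Real.cos (π/n) := Real.cos_pos_of_mem_Ioo ⟨by linarith, hππ⟩
      have hcot : Real.cot (π/n) = Real.cos (π/n) / Real.sin (π/n) := Real.cot_eq_cos_div_sin _
      have hklt : |κ| < Real.tan (π/n) := by
        have e1 : |κ| = |l.re| / l.im := by
          rw [hκ, abs_neg, abs_div, abs_of_pos him]
        rw [e1, Real.tan_eq_sin_div_cos, div_lt_div_iff₀ him hcos]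
        rw [hcot, div_mul_eq_mul_div, div_lt_iff₀ hsin] at hcon
        linarith
      rw [hτabs]
      calc Real.arctan |κ| < Real.arctan (Real.tan (π/n)) := Real.arctan_strictMono hklt
        _ = π/n := Real.arctan_tan (by linarith) hππ
  -- Step D : sweep and contradiction
  obtain ⟨M, kk, σ, P, hM1, hMn, hkk1, hargmax, hFfeq, hGglt, hL0', hLπ', hPM, hσM⟩ :=
    sweep_exists n hn v hpos
  obtain ⟨p, hp_def⟩ : ∃ p : ℕ → ℝ, ∀ j, p j = Ff (σ j) (P j) := ⟨_, fun _ => rfl⟩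
  obtain ⟨q, hq_def⟩ : ∃ q : ℕ → ℝ, ∀ j, q j = Gg (σ j) (P j) := ⟨_, fun _ => rfl⟩
  obtain ⟨q', hq'_def⟩ : ∃ q' : ℕ → ℝ, ∀ j, q' j = Gg (σ j) (P (j+1)) := ⟨_, fun _ => rfl⟩
  obtain ⟨L, hL_def⟩ : ∃ L : ℕ → ℝ, ∀ j, L j = σ (j+1) - σ j := ⟨_, fun _ => rfl⟩
  have hMkn : M ≤ kk * n := le_trans hMn (by calc n = 1 * n := (one_mul n).symm
    _ ≤ kk * n := Nat.mul_le_mul_right n hkk1)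
  apply cycle_contra n M kk hn hM1 hkk1 hMkn τ hτn p q q' L
  · -- p positive
    intro j _
    rw [hp_def]
    obtain ⟨i, hPi, hmax⟩ := hargmax j
    obtain ⟨i', hi'⟩ := hpos (σ j)
    rw [hPi]
    exact lt_of_lt_of_le hi' (hmax i')
  · -- q < q'
    intro j _
    rw [hq_def, hq'_def]
    exact hGglt j
  · -- star inequality
    intro j _
    obtain ⟨i, hPi, hmax⟩ := hargmax j
    have h0 := hstar0 (σ j) i hmax
    rw [Ff_complex_mul] at h0
    have hpj : p j = Ff (σ j) (v i) := by rw [hp_def, hPi]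
    have hqj : q j = Gg (σ j) (v i) := by rw [hq_def, hPi]
    have hq1 : 0 ≤ q j + p j * κ := by
      have h1 : 0 ≤ q j * l.im - p j * l.re := by
        rw [hpj, hqj]; linarith
      have h2 : q j + p j * κ = (q j * l.im - p j * l.re)/l.im := by
        rw [hκ]; field_simp; ring
      rw [h2]
      exact div_nonneg h1 him.le
    rw [hτdef, Real.cos_arctan, Real.sin_arctan]
    have e : q j * (1/Real.sqrt (1+κ^2)) + p j * (κ/Real.sqrt (1+κ^2))
        = (q j + p j * κ) * (1/Real.sqrt (1+κ^2)) := by ring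
    rw [e]
    have : (0:ℝ) < Real.sqrt (1+κ^2) := Real.sqrt_pos.mpr (by positivity)
    apply mul_nonneg hq1
    positivity
  · -- L positive
    intro j _
    rw [hL_def]
    exact hL0' j
  · -- L < π
    intro j _
    rw [hL_def]
    exact hLπ' j
  · -- rec1
    intro j _
    have he : σ (j+1) = σ j + L j := by rw [hL_def]; ring
    rw [hp_def, hp_def, hq'_def, he, Ff_add_angle, hFfeq j]
    ring
  · -- rec2
    intro j _
    have he : σ (j+1) = σ j + L j := by rw [hL_def]; ring
    rw [hq_def, hq'_def, he, Gg_add_angle]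
    rw [hp_def, hFfeq j]
    ring
  · -- p M = p 0
    rw [hp_def, hp_def, hPM, hσM]
    have he : σ 0 + 2*π*(kk:ℝ) = σ 0 + 2*π*((kk:ℤ):ℝ) := by push_cast; ring
    rw [he, Ff_periodic]
  · -- q M = q 0
    rw [hq_def, hq_def, hPM, hσM]
    have he : σ 0 + 2*π*(kk:ℝ) = σ 0 + 2*π*((kk:ℤ):ℝ) := by push_cast; ring
    rw [he, Gg_periodic]
  · -- sum of L
    have e : ∀ j ∈ Finset.range M, L j = σ (j+1) - σ j := fun j _ => hL_def j
    rw [Finset.sum_congr rfl e, Finset.sum_range_sub, hσM]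
    ring

/-- Any nonzero complex eigenvalue `λ` of an `n × n` Kolmogorov (master equation) matrix
(`n ≥ 2`) satisfies `|Im λ| ≤ cot (π / n) · |Re λ|`. -/
theorem cotangent_bound_for_kolmogorov_eigenvalues
    (n : ℕ) (hn : 2 ≤ n) (K : Matrix (Fin n) (Fin n) ℝ)
    (hoff : ∀ i j : Fin n, i ≠ j → 0 ≤ K i j)
    (hcol : ∀ j : Fin n, ∑ i, K i j = 0)
    (lam : ℂ) (hlam : lam ∈ spectrum ℂ (K.map (Complex.ofReal)))
    (hne : lam ≠ 0) :
    |lam.im| ≤ Real.cot (Real.pi / n) * |lam.re| := by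
  classical
  by_contra hcon
  push_neg at hcon
  have hπ := Real.pi_pos
  have hn0 : (0:ℝ) < n := by positivity
  have hπn : 0 < π/n := by positivity
  have hπn2 : π/n ≤ π/2 := by
    apply div_le_div_of_nonneg_left hπ.le (by norm_num)
    exact_mod_cast hn
  have hcotnn : 0 ≤ Real.cot (π/n) := by
    rw [Real.cot_eq_cos_div_sin]
    apply div_nonneg
    · exact Real.cos_nonneg_of_mem_Icc ⟨by linarith, hπn2⟩
    · exact (Real.sin_pos_of_pos_of_lt_pi hπn (by linarith)).le
  -- eigenvector of the transpose
  set A := K.map (Complex.ofReal) with hA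
  rw [spectrum.mem_iff] at hlam
  have hdet0 : (algebraMap ℂ (Matrix (Fin n) (Fin n) ℂ) lam - A).det = 0 := by
    by_contra h
    exact hlam ((Matrix.isUnit_iff_isUnit_det _).mpr (isUnit_iff_ne_zero.mpr h))
  have hdetT : ((algebraMap ℂ (Matrix (Fin n) (Fin n) ℂ) lam - A).transpose).det = 0 := by
    rw [Matrix.det_transpose]
    exact hdet0
  obtain ⟨v, hvne, hmul⟩ := (Matrix.exists_mulVec_eq_zero_iff).mpr hdetT
  have hmul2 : ∀ i, lam * v i = ∑ j, ((K j i : ℝ):ℂ) * v j := by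
    intro i
    have h0 : (algebraMap ℂ (Matrix (Fin n) (Fin n) ℂ) lam)
        = lam • (1 : Matrix (Fin n) (Fin n) ℂ) := Algebra.algebraMap_eq_smul_one lam
    have h1 := congrFun hmul i
    rw [h0, Matrix.transpose_sub, Matrix.transpose_smul, Matrix.transpose_one,
      Matrix.sub_mulVec, Matrix.smul_mulVec, Matrix.one_mulVec] at h1
    simp only [Pi.sub_apply, Pi.smul_apply, Pi.zero_apply, smul_eq_mul] at h1
    have h2 : lam * v i = (A.transpose.mulVec v) i := by
      rw [sub_eq_zero] at h1
      exact h1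
    rw [h2]
    simp only [Matrix.mulVec, dotProduct, Matrix.transpose_apply, hA, Matrix.map_apply]
  have hvex : ∃ i, v i ≠ 0 := Function.ne_iff.mp hvne
  set b : Fin n → Fin n → ℝ := fun i j => K j i with hb
  have hboff : ∀ i j : Fin n, i ≠ j → 0 ≤ b i j := fun i j hij => hoff j i (fun h => hij h.symm)
  have hbrow : ∀ i : Fin n, ∑ j, b i j = 0 := fun i => hcol i
  rcases lt_trichotomy lam.im 0 with hlt | heq | hgt
  · -- conjugate case
    have himc : 0 < (starRingEnd ℂ lam).im := by
      rw [Complex.conj_im]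
      linarith
    have heig' : ∀ i, (starRingEnd ℂ lam) * (starRingEnd ℂ (v i))
        = ∑ j, ((b i j : ℝ):ℂ) * (starRingEnd ℂ (v j)) := by
      intro i
      have h0 := congrArg (starRingEnd ℂ) (hmul2 i)
      rw [map_mul, map_sum] at h0
      rw [h0]
      apply Finset.sum_congr rfl
      intro j _
      rw [map_mul, Complex.conj_ofReal]
    have hvex' : ∃ i, starRingEnd ℂ (v i) ≠ 0 := by
      obtain ⟨i, hi⟩ := hvex
      exact ⟨i, by simpa using hi⟩
    apply core n hn (starRingEnd ℂ lam) himc b hboff hbrow (fun i => starRingEnd ℂ (v i))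
      hvex' heig'
    rw [Complex.conj_re, Complex.conj_im]
    rw [abs_of_neg hlt] at hcon
    linarith
  · rw [heq] at hcon
    simp only [abs_zero] at hcon
    nlinarith [abs_nonneg lam.re]
  · apply core n hn lam hgt b hboff hbrow v hvex hmul2
    rw [abs_of_pos hgt] at hcon
    exact hcon

end
end

section
/- Let n ≥ 2 and q > 0. Let C be the n×n real matrix of the simple irreversible cycle A_1 → A_2 → … → A_n → A_1 with all rate constants equal to q, i.e. C i j = q if i = j + 1 (mod n), C j j = −q, and C i j = 0 otherwise. Then the complex eigenvalue λ = q·(exp(2πi/n) − 1) of C is nonzero when n ≥ 2 (for n ≥ 3 it has nonzero imaginary part) and satisfies |Im λ| = cot(π/n) · |Re λ|. Hence the bound |Im λ| ≤ cot(π/n)·|Re λ| for Kolmogorov matrices is sharp. -/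
/-- For the simple irreversible cycle `A₁ → A₂ → … → Aₙ → A₁` with all rate constants
equal to `q > 0` (`n ≥ 2`), the number `λ = q (exp (2πi/n) − 1)` is a nonzero eigenvalue
(with nonzero imaginary part when `n ≥ 3`) and satisfies `|Im λ| = cot (π/n) · |Re λ|`:
the cotangent bound for Kolmogorov matrices is sharp. -/
theorem simple_cycle_eigenvalue_attains_cotangent_bound
    (n : ℕ) (hn : 2 ≤ n) (q : ℝ) (hq : 0 < q)
    (C : Matrix (Fin n) (Fin n) ℝ)
    (hC : C = Matrix.of fun i j : Fin n =>
      if (i : ℕ) = ((j : ℕ) + 1) % n then q else if i = j then -q else 0)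
    (lam : ℂ)
    (hlamdef : lam = q * (Complex.exp (2 * Real.pi * Complex.I / n) - 1)) :
    lam ∈ spectrum ℂ (C.map (Complex.ofReal)) ∧
    lam ≠ 0 ∧
    (3 ≤ n → lam.im ≠ 0) ∧
    |lam.im| = Real.cot (Real.pi / n) * |lam.re| := by
  haveI : NeZero n := ⟨by omega⟩
  have hn0 : (n : ℝ) ≠ 0 := by positivity
  have hnC : (n : ℂ) ≠ 0 := Nat.cast_ne_zero.mpr (by omega)
  set θ : ℝ := 2 * Real.pi / n with hθ
  have hθI : (2 * Real.pi * Complex.I / n : ℂ) = (θ : ℂ) * Complex.I := by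
    push_cast [hθ]; ring
  -- real and imaginary parts of lam
  have hre : lam.re = q * (Real.cos θ - 1) := by
    rw [hlamdef, hθI]
    simp [Complex.mul_re, Complex.exp_ofReal_mul_I_re, Complex.exp_ofReal_mul_I_im]
  have him : lam.im = q * Real.sin θ := by
    rw [hlamdef, hθI]
    simp [Complex.mul_im, Complex.exp_ofReal_mul_I_re, Complex.exp_ofReal_mul_I_im]
  set c : ℝ := Real.pi / n with hc
  have hθ2c : θ = 2 * c := by rw [hθ, hc]; ring
  have hcpos : 0 < c := by rw [hc]; positivity
  have hcle : c ≤ Real.pi / 2 := by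
    rw [hc]
    have := Real.pi_pos
    rw [div_le_div_iff₀ (by positivity) (by norm_num)]
    have h2 : (2:ℝ) ≤ n := by exact_mod_cast hn
    nlinarith
  have hsinc : 0 < Real.sin c :=
    Real.sin_pos_of_pos_of_lt_pi hcpos (lt_of_le_of_lt hcle (by linarith [Real.pi_pos]))
  have hcosc : 0 ≤ Real.cos c :=
    Real.cos_nonneg_of_mem_Icc ⟨by linarith, hcle⟩
  have hcos2 : Real.cos θ = 1 - 2 * Real.sin c ^ 2 := by
    rw [hθ2c, Real.cos_two_mul]
    nlinarith [Real.sin_sq_add_cos_sq c]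
  have hsin2 : Real.sin θ = 2 * Real.sin c * Real.cos c := by
    rw [hθ2c, Real.sin_two_mul]
  have hreneg : lam.re < 0 := by
    rw [hre, hcos2]
    nlinarith [mul_pos hq (mul_pos hsinc hsinc)]
  have hlamne : lam ≠ 0 := fun h => absurd (h ▸ hreneg) (by simp)
  set ω : ℂ := Complex.exp ((θ : ℂ) * Complex.I) with hω
  set ζ : ℂ := ω⁻¹ with hζ
  have hωne : ω ≠ 0 := Complex.exp_ne_zero _
  have hζω : ζ * ω = 1 := inv_mul_cancel₀ hωne
  have hωn : ω ^ n = 1 := by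
    rw [hω, ← Complex.exp_nat_mul]
    have h1 : (n : ℂ) * ((θ : ℂ) * Complex.I) = 2 * Real.pi * Complex.I := by
      push_cast [hθ]
      field_simp [hnC]
    rw [h1, Complex.exp_two_pi_mul_I]
  have hζn : ζ ^ n = 1 := by rw [hζ, inv_pow, hωn, inv_one]
  set v : Fin n → ℂ := fun j => ζ ^ (j : ℕ) with hv
  have hζmod : ∀ a : ℕ, ζ ^ (a % n) = ζ ^ a := by
    intro a
    conv_rhs => rw [← Nat.mod_add_div a n]
    rw [pow_add, pow_mul, hζn, one_pow, mul_one]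
  have hval1 : ((1 : Fin n) : ℕ) = 1 := by
    simp [Fin.val_one', Nat.mod_eq_of_lt (by omega : 1 < n)]
  have hshift : ∀ i : Fin n, v (i - 1) = ω * v i := by
    intro i
    have h1 : ζ ^ ((i : ℕ)) = ζ ^ (((i - 1 : Fin n) : ℕ)) * ζ := by
      have h2 : ((i - 1 : Fin n) + 1) = i := by abel
      calc ζ ^ ((i : ℕ)) = ζ ^ ((((i - 1 : Fin n) + 1 : Fin n) : ℕ)) := by rw [h2]
        _ = ζ ^ ((((i - 1 : Fin n) : ℕ) + 1) % n) := by rw [Fin.val_add, hval1]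
        _ = ζ ^ (((i - 1 : Fin n) : ℕ) + 1) := hζmod _
        _ = ζ ^ (((i - 1 : Fin n) : ℕ)) * ζ := by rw [pow_succ]
    show ζ ^ (((i - 1 : Fin n) : ℕ)) = ω * ζ ^ ((i : ℕ))
    rw [h1]
    calc ζ ^ (((i - 1 : Fin n) : ℕ))
        = ζ ^ (((i - 1 : Fin n) : ℕ)) * (ζ * ω) := by rw [hζω, mul_one]
      _ = ω * (ζ ^ (((i - 1 : Fin n) : ℕ)) * ζ) := by ring
  have hlamω : lam = (q : ℂ) * (ω - 1) := by rw [hlamdef, hθI, hω]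
  -- the eigen equation
  have hmv : Matrix.mulVec (C.map Complex.ofReal) v = lam • v := by
    funext i
    simp only [Matrix.mulVec, dotProduct, Pi.smul_apply, smul_eq_mul]
    have hine : i ≠ i - 1 := by
      intro h
      have h0 : (1 : Fin n) = 0 := sub_eq_self.mp h.symm
      rw [Fin.ext_iff, hval1] at h0
      simp at h0
    have hcond : ∀ j : Fin n, ((i : ℕ) = ((j : ℕ) + 1) % n) ↔ j = i - 1 := by
      intro j
      have h1 : ((j : ℕ) + 1) % n = ((j + 1 : Fin n) : ℕ) := by rw [Fin.val_add, hval1]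
      rw [h1]
      constructor
      · intro h
        have h2 : i = j + 1 := Fin.ext h
        rw [h2]; abel
      · intro h
        have h2 : j + 1 = i := by rw [h]; abel
        rw [← h2]
    have hterm : ∀ j : Fin n, (C.map Complex.ofReal) i j * v j
        = (if j = i - 1 then (q : ℂ) * v j else 0)
          + (if j = i then -(q : ℂ) * v j else 0) := by
      intro j
      rw [hC]
      simp only [Matrix.map_apply, Matrix.of_apply]
      by_cases h1 : (i : ℕ) = ((j : ℕ) + 1) % n
      · have hj : j = i - 1 := (hcond j).mp h1
        have hji : ¬ j = i := by
          rw [hj]; exact fun h => hine h.symm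
        rw [if_pos h1, if_pos hj, if_neg hji]
        ring
      · have hj : ¬ j = i - 1 := fun h => h1 ((hcond j).mpr h)
        rw [if_neg h1, if_neg hj]
        by_cases h2 : i = j
        · rw [if_pos h2, if_pos h2.symm]
          push_cast; ring
        · rw [if_neg h2, if_neg (fun h => h2 h.symm)]
          simp
    calc ∑ j : Fin n, (C.map Complex.ofReal) i j * v j
        = ∑ j : Fin n, ((if j = i - 1 then (q : ℂ) * v j else 0)
            + (if j = i then -(q : ℂ) * v j else 0)) :=
          Finset.sum_congr rfl fun j _ => hterm j
      _ = (q : ℂ) * v (i - 1) + -(q : ℂ) * v i := by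
          rw [Finset.sum_add_distrib, Finset.sum_ite_eq' Finset.univ (i - 1),
            Finset.sum_ite_eq' Finset.univ i]
          simp
      _ = lam * v i := by
          rw [hshift i, hlamω]; ring
  -- spectrum membership
  have hspec : lam ∈ spectrum ℂ (C.map Complex.ofReal) := by
    rw [spectrum.mem_iff]
    intro hunit
    obtain ⟨u, hu⟩ := hunit
    have hzero : Matrix.mulVec (algebraMap ℂ (Matrix (Fin n) (Fin n) ℂ) lam - C.map Complex.ofReal) v = 0 := by
      rw [Matrix.sub_mulVec, hmv, Algebra.algebraMap_eq_smul_one,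
        Matrix.smul_mulVec, Matrix.one_mulVec]
      simp
    have hv0 : v = 0 := by
      calc v = Matrix.mulVec (1 : Matrix (Fin n) (Fin n) ℂ) v := (Matrix.one_mulVec v).symm
        _ = Matrix.mulVec ((↑u⁻¹ * ↑u : Matrix (Fin n) (Fin n) ℂ)) v := by rw [u.inv_mul]
        _ = Matrix.mulVec (↑u⁻¹ : Matrix (Fin n) (Fin n) ℂ) (Matrix.mulVec (↑u : Matrix (Fin n) (Fin n) ℂ) v) :=
            (Matrix.mulVec_mulVec _ _ _).symm
        _ = Matrix.mulVec (↑u⁻¹ : Matrix (Fin n) (Fin n) ℂ) 0 := by rw [hu, hzero]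
        _ = 0 := Matrix.mulVec_zero _
    have h1 : v ⟨0, by omega⟩ = 1 := by rw [hv]; simp
    rw [hv0] at h1
    simp at h1
  refine ⟨hspec, hlamne, ?_, ?_⟩
  · intro h3
    have h3' : (3:ℝ) ≤ n := by exact_mod_cast h3
    have hpi := Real.pi_pos
    have h2c : 2 * c < Real.pi := by
      rw [hc, mul_div_assoc']
      rw [div_lt_iff₀ (by positivity)]
      nlinarith
    have hsinθ : 0 < Real.sin θ := by
      rw [hθ2c]
      exact Real.sin_pos_of_pos_of_lt_pi (by linarith) h2c
    rw [him]
    positivity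
  · rw [him, hre, hcos2, hsin2, Real.cot_eq_cos_div_sin]
    rw [abs_of_nonneg (by positivity), abs_of_nonpos (by nlinarith)]
    field_simp
    ring
end

section
/- Let K be an n×n real Kolmogorov matrix (K i j ≥ 0 for i ≠ j, and ∑_i K i j = 0 for each j). Then there exists a vector P* in the standard simplex Δ_n = { P ∈ ℝ^n : P_i ≥ 0 for all i, ∑_i P_i = 1 } such that K P* = 0 (an equilibrium). -/
open Filter Topology Finset Matrix

/-- Every Kolmogorov matrix has an equilibrium in the standard simplex:
there is `P* ∈ Δₙ` with `K P* = 0`. -/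
theorem kolmogorov_has_equilibrium_in_simplex
    (n : ℕ) (hn : 0 < n) (K : Matrix (Fin n) (Fin n) ℝ)
    (hoff : ∀ i j : Fin n, i ≠ j → 0 ≤ K i j)
    (hcol : ∀ j : Fin n, ∑ i, K i j = 0) :
    ∃ P : Fin n → ℝ, (∀ i, 0 ≤ P i) ∧ (∑ i, P i = 1) ∧ K.mulVec P = 0 := by
  -- diagonal entries are nonpositive
  have hKd : ∀ j, K j j ≤ 0 := by
    intro j
    have h := Finset.add_sum_erase Finset.univ (fun i => K i j) (Finset.mem_univ j)
    rw [hcol j] at h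
    have h2 : (0:ℝ) ≤ ∑ i ∈ Finset.univ.erase j, K i j :=
      Finset.sum_nonneg fun i hi => hoff i j (Finset.ne_of_mem_erase hi)
    linarith
  set c : ℝ := 1 + ∑ j, -(K j j) with hc_def
  have hsum_nonneg : (0:ℝ) ≤ ∑ j, -(K j j) :=
    Finset.sum_nonneg fun j _ => by linarith [hKd j]
  have hc : (0:ℝ) < c := by positivity
  have hcb : ∀ j, -(K j j) ≤ c := by
    intro j
    have : -(K j j) ≤ ∑ j', -(K j' j') :=
      Finset.single_le_sum (f := fun j' => -(K j' j'))
        (fun j' _ => by linarith [hKd j']) (Finset.mem_univ j)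
    linarith
  set A : Matrix (Fin n) (Fin n) ℝ := 1 + c⁻¹ • K with hA_def
  have hA_nonneg : ∀ i j, 0 ≤ A i j := by
    intro i j
    by_cases h : i = j
    · subst h
      have hAe : A i i = 1 + c⁻¹ * K i i := by simp [hA_def, Matrix.one_apply]
      rw [hAe]
      have h1 : c⁻¹ * (-(K i i)) ≤ c⁻¹ * c :=
        mul_le_mul_of_nonneg_left (hcb i) (by positivity)
      rw [inv_mul_cancel₀ hc.ne'] at h1
      nlinarith
    · have hAe : A i j = c⁻¹ * K i j := by simp [hA_def, Matrix.one_apply, h]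
      rw [hAe]
      exact mul_nonneg (by positivity) (hoff i j h)
  have hA_col : ∀ j, ∑ i, A i j = 1 := by
    intro j
    simp only [hA_def, Matrix.add_apply, Matrix.smul_apply, smul_eq_mul, Finset.sum_add_distrib,
      ← Finset.mul_sum, hcol j, mul_zero, add_zero]
    simp [Matrix.one_apply]
  -- the simplex as a set
  set S : Set (Fin n → ℝ) := stdSimplex ℝ (Fin n) with hS_def
  have hS_mem : ∀ u : Fin n → ℝ, u ∈ S ↔ (∀ i, 0 ≤ u i) ∧ ∑ i, u i = 1 := fun u => Iff.rfl
  have hA_maps : ∀ u ∈ S, A.mulVec u ∈ S := by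
    intro u hu
    rw [hS_mem] at hu ⊢
    constructor
    · intro i
      rw [Matrix.mulVec, dotProduct]
      exact Finset.sum_nonneg fun j _ => mul_nonneg (hA_nonneg i j) (hu.1 j)
    calc ∑ i, A.mulVec u i = ∑ j, (∑ i, A i j) * u j := by
          simp only [Matrix.mulVec, dotProduct]
          rw [Finset.sum_comm]
          simp [Finset.sum_mul]
    _ = ∑ j, u j := by simp [hA_col]
    _ = 1 := hu.2
  -- starting point
  set P0 : Fin n → ℝ := fun _ => (n : ℝ)⁻¹ with hP0_def
  have hP0 : P0 ∈ S := by
    rw [hS_mem]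
    refine ⟨fun i => by positivity, ?_⟩
    simp [hP0_def, Finset.sum_const]
    field_simp
  -- powers
  set w : ℕ → (Fin n → ℝ) := fun m => (A ^ m).mulVec P0 with hw_def
  have hw_succ : ∀ m, A.mulVec (w m) = w (m + 1) := by
    intro m
    simp [hw_def, pow_succ', ← Matrix.mulVec_mulVec]
  have hw_mem : ∀ m, w m ∈ S := by
    intro m
    induction m with
    | zero => simpa [hw_def, Matrix.one_mulVec] using hP0
    | succ m ih => rw [← hw_succ]; exact hA_maps _ ih
  -- Cesàro averages
  set v : ℕ → (Fin n → ℝ) := fun m => ((m + 1 : ℕ) : ℝ)⁻¹ • ∑ k ∈ Finset.range (m + 1), w k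
    with hv_def
  have hv_mem : ∀ m, v m ∈ S := by
    intro m
    rw [hS_mem]
    constructor
    · intro i
      have : (0:ℝ) ≤ ∑ k ∈ Finset.range (m + 1), w k i :=
        Finset.sum_nonneg fun k _ => ((hS_mem _).1 (hw_mem k)).1 i
      simp only [hv_def, Pi.smul_apply, Finset.sum_apply, smul_eq_mul]
      positivity
    · have hsum : ∑ i, ∑ k ∈ Finset.range (m + 1), w k i = (m + 1 : ℝ) := by
        rw [Finset.sum_comm]
        have : ∀ k ∈ Finset.range (m + 1), ∑ i, w k i = 1 :=
          fun k _ => ((hS_mem _).1 (hw_mem k)).2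
        rw [Finset.sum_congr rfl this]
        simp
      simp only [hv_def, Pi.smul_apply, Finset.sum_apply, smul_eq_mul, ← Finset.mul_sum]
      rw [hsum]
      field_simp
      exact (Nat.cast_succ m).symm
  -- key identity : A (v m) = v m + (m+1)⁻¹ • (w (m+1) - w 0)
  have hkey : ∀ m, A.mulVec (v m) = v m + ((m + 1 : ℕ) : ℝ)⁻¹ • (w (m + 1) - w 0) := by
    intro m
    have h1 : A.mulVec (v m)
        = ((m + 1 : ℕ) : ℝ)⁻¹ • ∑ k ∈ Finset.range (m + 1), w (k + 1) := by
      simp only [hv_def]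
      rw [Matrix.mulVec_smul]
      congr 1
      rw [show A.mulVec (∑ k ∈ Finset.range (m + 1), w k)
            = ∑ k ∈ Finset.range (m + 1), A.mulVec (w k) from by
        simpa only [Matrix.mulVecLin_apply] using map_sum A.mulVecLin w (Finset.range (m + 1))]
      exact Finset.sum_congr rfl fun k _ => hw_succ k
    have h2 : ∑ k ∈ Finset.range (m + 1), w (k + 1)
        = ∑ k ∈ Finset.range (m + 1), w k + (w (m + 1) - w 0) := by
      have ha := Finset.sum_range_succ' w (m + 1)
      rw [Finset.sum_range_succ w (m + 1)] at ha
      -- ha : ∑ k ∈ range (m+1), w k + w (m+1) = ∑ k ∈ range (m+1), w (k+1) + w 0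
      have hb : ∑ k ∈ Finset.range (m + 1), w (k + 1)
          = (∑ k ∈ Finset.range (m + 1), w k + w (m + 1)) - w 0 :=
        eq_sub_of_add_eq ha.symm
      rw [hb]; abel
    rw [h1, h2, smul_add]
  -- compactness: extract a convergent subsequence of v
  have hS_compact : IsCompact S := isCompact_stdSimplex ℝ (Fin n)
  obtain ⟨P, hPS, φ, hφ, hlim⟩ := hS_compact.tendsto_subseq hv_mem
  -- the perturbation term tends to 0
  have hnorm : ∀ u ∈ S, ‖u‖ ≤ 1 := by
    intro u hu
    rw [pi_norm_le_iff_of_nonneg zero_le_one]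
    intro i
    rw [Real.norm_eq_abs, abs_of_nonneg (((hS_mem u).1 hu).1 i)]
    have := Finset.single_le_sum (f := u) (fun j _ => ((hS_mem u).1 hu).1 j) (Finset.mem_univ i)
    rw [((hS_mem u).1 hu).2] at this
    exact this
  have hpert : Tendsto (fun m => ((m + 1 : ℕ) : ℝ)⁻¹ • (w (m + 1) - w 0)) atTop
      (𝓝 (0 : Fin n → ℝ)) := by
    refine squeeze_zero_norm (f := fun m => ((m + 1 : ℕ) : ℝ)⁻¹ • (w (m + 1) - w 0))
        (a := fun m => 2 / ((m : ℝ) + 1)) ?_ ?_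
    · intro m
      rw [norm_smul]
      have hb : ‖w (m + 1) - w 0‖ ≤ 2 := by
        calc ‖w (m + 1) - w 0‖ ≤ ‖w (m + 1)‖ + ‖w 0‖ := norm_sub_le _ _
        _ ≤ 1 + 1 := add_le_add (hnorm _ (hw_mem _)) (hnorm _ (hw_mem _))
        _ = 2 := by norm_num
      have h1 : ‖((m + 1 : ℕ) : ℝ)⁻¹‖ = ((m : ℝ) + 1)⁻¹ := by
        rw [Real.norm_eq_abs, abs_of_nonneg (by positivity)]
        push_cast; ring
      rw [h1, div_eq_mul_inv, mul_comm]
      exact mul_le_mul_of_nonneg_right hb (by positivity)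
    · have := tendsto_one_div_add_atTop_nhds_zero_nat (𝕜 := ℝ)
      have h2 := this.const_mul (2 : ℝ)
      simpa [div_eq_mul_inv] using h2
  -- pass to the limit: A P = P
  have hcont : Continuous fun u : Fin n → ℝ => A.mulVec u := by
    have : (fun u : Fin n → ℝ => A.mulVec u) = A.mulVecLin := rfl
    rw [this]
    exact A.mulVecLin.continuous_of_finiteDimensional
  have hlim1 : Tendsto (fun j => A.mulVec (v (φ j))) atTop (𝓝 (A.mulVec P)) :=
    (hcont.tendsto P).comp hlim
  have hlim2 : Tendsto (fun j => A.mulVec (v (φ j))) atTop (𝓝 P) := by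
    have heq : (fun j => A.mulVec (v (φ j)))
        = fun j => v (φ j) + ((φ j + 1 : ℕ) : ℝ)⁻¹ • (w (φ j + 1) - w 0) :=
      funext fun j => hkey (φ j)
    rw [heq]
    have hp2 : Tendsto (fun j => ((φ j + 1 : ℕ) : ℝ)⁻¹ • (w (φ j + 1) - w 0)) atTop
        (𝓝 (0 : Fin n → ℝ)) := hpert.comp hφ.tendsto_atTop
    simpa using hlim.add hp2
  have hAP : A.mulVec P = P := tendsto_nhds_unique hlim1 hlim2
  -- conclude K P = 0
  have hKP : K.mulVec P = 0 := by
    have h1 : A.mulVec P = P + c⁻¹ • K.mulVec P := by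
      rw [hA_def, Matrix.add_mulVec, Matrix.one_mulVec, Matrix.smul_mulVec]
    rw [hAP] at h1
    have h2 : c⁻¹ • K.mulVec P = 0 := by
      have := congrArg (fun x => x - P) h1
      simpa using this.symm
    have h3 := congrArg (fun x => c • x) h2
    simpa [smul_smul, mul_inv_cancel₀ hc.ne'] using h3
  exact ⟨P, ((hS_mem P).1 hPS).1, ((hS_mem P).1 hPS).2, hKP⟩
end

section
/- Let K be an n×n real Kolmogorov matrix (K i j ≥ 0 for i ≠ j, and ∑_i K i j = 0 for each j) that admits a positive equilibrium, i.e. a vector P* with P*_i > 0 for all i and K P* = 0. Then K has no nonzero purely imaginary eigenvalue: if λ ∈ ℂ is an eigenvalue of K with Re λ = 0, then λ = 0. -/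
/-- A Kolmogorov matrix with a positive equilibrium has no nonzero purely imaginary
eigenvalue. -/
theorem kolmogorov_no_imaginary_eigenvalue
    (n : ℕ) (K : Matrix (Fin n) (Fin n) ℝ)
    (hoff : ∀ i j : Fin n, i ≠ j → 0 ≤ K i j)
    (hcol : ∀ j : Fin n, ∑ i, K i j = 0)
    (Pstar : Fin n → ℝ) (hpos : ∀ i, 0 < Pstar i) (heq : K.mulVec Pstar = 0)
    (lam : ℂ) (hlam : lam ∈ spectrum ℂ (K.map (Complex.ofReal)))
    (hre : lam.re = 0) :
    lam = 0 := by
  set M : Matrix (Fin n) (Fin n) ℂ := K.map Complex.ofReal with hM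
  -- turn spectrum membership into an eigenvector
  have hspec : lam ∈ spectrum ℂ (Matrix.toLinAlgEquiv' M) := by
    rwa [AlgEquiv.spectrum_eq]
  have heig : Module.End.HasEigenvalue (Matrix.toLinAlgEquiv' M) lam :=
    Module.End.hasEigenvalue_iff_mem_spectrum.mpr hspec
  obtain ⟨v, hvmem, hvne⟩ := heig.exists_hasEigenvector
  have hv : M.mulVec v = lam • v := by
    have h := Module.End.mem_eigenspace_iff.mp hvmem
    rwa [Matrix.toLinAlgEquiv'_apply] at h
  -- pick the index maximizing ‖v j‖ / Pstar j
  set g : Fin n → ℝ := fun j => ‖v j‖ / Pstar j with hg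
  have hne : (Finset.univ : Finset (Fin n)).Nonempty := by
    rcases Function.ne_iff.mp hvne with ⟨j, -⟩
    exact ⟨j, Finset.mem_univ j⟩
  obtain ⟨i, -, hmax⟩ := Finset.exists_max_image Finset.univ g hne
  have hgi : 0 < g i := by
    rcases Function.ne_iff.mp hvne with ⟨j, hj⟩
    have : 0 < g j := div_pos (norm_pos_iff.mpr (by simpa using hj)) (hpos j)
    exact lt_of_lt_of_le this (hmax j (Finset.mem_univ j))
  have hvi : 0 < ‖v i‖ := by
    by_contra h
    push_neg at h
    have h0 : ‖v i‖ = 0 := le_antisymm h (norm_nonneg _)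
    rw [hg] at hgi
    simp [h0] at hgi
  have hvj_le : ∀ j, ‖v j‖ ≤ g i * Pstar j := fun j => by
    have h1 : g j ≤ g i := hmax j (Finset.mem_univ j)
    have h2 : ‖v j‖ = g j * Pstar j := by
      rw [hg]
      exact (div_mul_cancel₀ _ (hpos j).ne').symm
    rw [h2]
    exact mul_le_mul_of_nonneg_right h1 (hpos j).le
  -- the row equation at i
  have hrow : lam * v i = ∑ j, (K i j : ℂ) * v j := by
    have := congrFun hv i
    simpa [Matrix.mulVec, dotProduct, hM, Matrix.map_apply] using this.symm
  set c : ℝ := K i i with hc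
  have hrow' : (lam - (c : ℂ)) * v i = ∑ j ∈ Finset.univ.erase i, (K i j : ℂ) * v j := by
    rw [Finset.sum_erase_eq_sub (Finset.mem_univ i), ← hrow]
    ring
  -- row sum identity from the equilibrium
  have hsum : ∑ j ∈ Finset.univ.erase i, K i j * Pstar j = -(c * Pstar i) := by
    have h0 : ∑ j, K i j * Pstar j = 0 := by
      have := congrFun heq i
      simpa [Matrix.mulVec, dotProduct] using this
    rw [Finset.sum_erase_eq_sub (Finset.mem_univ i), h0]
    ring
  -- Gershgorin estimate
  have hkey : ‖lam - (c : ℂ)‖ * ‖v i‖ ≤ (-c) * ‖v i‖ := by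
    calc ‖lam - (c : ℂ)‖ * ‖v i‖ = ‖(lam - (c : ℂ)) * v i‖ := (norm_mul _ _).symm
      _ = ‖∑ j ∈ Finset.univ.erase i, (K i j : ℂ) * v j‖ := by rw [hrow']
      _ ≤ ∑ j ∈ Finset.univ.erase i, ‖(K i j : ℂ) * v j‖ := norm_sum_le _ _
      _ = ∑ j ∈ Finset.univ.erase i, K i j * ‖v j‖ := by
          refine Finset.sum_congr rfl fun j hj => ?_
          rw [norm_mul, Complex.norm_real, Real.norm_of_nonneg
            (hoff i j (Finset.ne_of_mem_erase hj).symm)]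
      _ ≤ ∑ j ∈ Finset.univ.erase i, K i j * (g i * Pstar j) := by
          refine Finset.sum_le_sum fun j hj => ?_
          exact mul_le_mul_of_nonneg_left (hvj_le j)
            (hoff i j (Finset.ne_of_mem_erase hj).symm)
      _ = g i * ∑ j ∈ Finset.univ.erase i, K i j * Pstar j := by
          rw [Finset.mul_sum]; exact Finset.sum_congr rfl fun j _ => by ring
      _ = g i * (-(c * Pstar i)) := by rw [hsum]
      _ = (-c) * (g i * Pstar i) := by ring
      _ = (-c) * ‖v i‖ := by
          congr 1
          rw [hg]
          exact div_mul_cancel₀ _ (hpos i).ne'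
  have hball : ‖lam - (c : ℂ)‖ ≤ -c := le_of_mul_le_mul_right hkey hvi
  have hcnn : 0 ≤ -c := le_trans (norm_nonneg _) hball
  -- square it
  have hsq : ‖lam - (c : ℂ)‖ ^ 2 ≤ (-c) ^ 2 := by
    exact pow_le_pow_left₀ (norm_nonneg _) hball 2
  have hnormsq : ‖lam - (c : ℂ)‖ ^ 2 = lam.im ^ 2 + c ^ 2 := by
    rw [Complex.sq_norm]
    simp [Complex.normSq_apply, Complex.sub_re, Complex.sub_im, hre]
    ring
  have him : lam.im = 0 := by
    nlinarith [hsq, hnormsq]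
  exact Complex.ext hre him
end

section
/- Let m ≥ 3 and let α_i, β_i, γ_i ∈ (0, π) for i = 1, …, m satisfy: ∑_i β_i = 2π, α_i + β_i + γ_i = π for each i, and ∏_i sin α_i = ∏_i sin γ_i. Then min_i α_i ≤ π/2 − π/m. Moreover this bound is attained: the choice α_i = γ_i = π/2 − π/m, β_i = 2π/m for all i satisfies all the conditions and gives min_i α_i = π/2 − π/m. -/
open Real

private lemma sin_key_aux (a b d : ℝ) (hb : 0 < Real.sin b) (had : 0 < Real.sin (a - d)) :
    Real.sin d * Real.sin (π - b - a) < Real.sin a * Real.sin (π - b - d) := by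
  have h1 : π - b - a = π - (b + a) := by ring
  have h2 : π - b - d = π - (b + d) := by ring
  rw [h1, h2, Real.sin_pi_sub, Real.sin_pi_sub]
  have hident : Real.sin a * Real.sin (b + d) - Real.sin d * Real.sin (b + a)
      = Real.sin b * Real.sin (a - d) := by
    rw [Real.sin_add, Real.sin_add, Real.sin_sub]; ring
  nlinarith [mul_pos hb had]

open Real in
/-- Under the paper's conditions (Cond) on the angles of a star-shaped polygon with
`m ≥ 3` vertices, `min_i αᵢ ≤ π/2 − π/m`; the bound is attained by the regular
configuration `αᵢ = γᵢ = π/2 − π/m`, `βᵢ = 2π/m`. -/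
theorem min_alpha_le_regular
    (m : ℕ) (hm : 3 ≤ m) (α β γ : Fin m → ℝ)
    (hα : ∀ i, α i ∈ Set.Ioo 0 π) (hβ : ∀ i, β i ∈ Set.Ioo 0 π)
    (hγ : ∀ i, γ i ∈ Set.Ioo 0 π)
    (hsum : ∑ i, β i = 2 * π)
    (htri : ∀ i, α i + β i + γ i = π)
    (hclose : ∏ i, Real.sin (α i) = ∏ i, Real.sin (γ i)) :
    (Finset.univ.inf' ⟨⟨0, by omega⟩, Finset.mem_univ _⟩ α ≤ π / 2 - π / m) ∧
    (∀ α' β' γ' : Fin m → ℝ,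
      α' = (fun _ => π / 2 - π / m) → β' = (fun _ => 2 * π / m) →
      γ' = (fun _ => π / 2 - π / m) →
      (∀ i, α' i ∈ Set.Ioo 0 π) ∧ (∀ i, β' i ∈ Set.Ioo 0 π) ∧
      (∀ i, γ' i ∈ Set.Ioo 0 π) ∧ (∑ i, β' i = 2 * π) ∧
      (∀ i, α' i + β' i + γ' i = π) ∧
      (∏ i, Real.sin (α' i) = ∏ i, Real.sin (γ' i)) ∧
      Finset.univ.inf' ⟨⟨0, by omega⟩, Finset.mem_univ _⟩ α' = π / 2 - π / m) := by
  have hπ : (0:ℝ) < π := Real.pi_pos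
  have hm3 : (3:ℝ) ≤ (m:ℝ) := by exact_mod_cast hm
  have hm0 : (0:ℝ) < (m:ℝ) := by linarith
  have hπm : 0 < π / m := by positivity
  have hπm3 : π / m ≤ π / 3 := by
    apply div_le_div_of_nonneg_left hπ.le (by norm_num) hm3
  set d : ℝ := π / 2 - π / m with hd
  have hmne : (m:ℝ) ≠ 0 := hm0.ne'
  have hd0 : 0 < d := by rw [hd]; linarith
  have hdπ2 : d < π / 2 := by rw [hd]; linarith
  have hdπ : d < π := hdπ2.trans (by linarith)
  constructor
  · -- main inequality
    by_contra hcon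
    push_neg at hcon
    have hi : ∀ i, d < α i := fun i =>
      lt_of_lt_of_le hcon (Finset.inf'_le _ (Finset.mem_univ i))
    have hne : (Finset.univ : Finset (Fin m)).Nonempty :=
      ⟨⟨0, by omega⟩, Finset.mem_univ _⟩
    -- per-index strict inequality
    have key : ∀ i, Real.sin d * Real.sin (γ i) < Real.sin (α i) * Real.sin (π - d - β i) := by
      intro i
      have hγeq : γ i = π - β i - α i := by have := htri i; linarith
      have hsb : 0 < Real.sin (β i) := Real.sin_pos_of_pos_of_lt_pi (hβ i).1 (hβ i).2
      have hsad : 0 < Real.sin (α i - d) := by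
        apply Real.sin_pos_of_pos_of_lt_pi
        · linarith [hi i]
        · linarith [(hα i).2]
      have h2 : π - d - β i = π - β i - d := by ring
      rw [hγeq, h2]
      exact sin_key_aux (α i) (β i) d hsb hsad
    -- domain facts for π - d - β i
    have hdom : ∀ i, 0 < π - d - β i ∧ π - d - β i < π := by
      intro i
      constructor
      · have := htri i; have := hi i; have := (hγ i).1; linarith
      · have := (hβ i).1; linarith
    -- product of strict inequalities
    have hprod : ∏ i, (Real.sin d * Real.sin (γ i)) <
        ∏ i, (Real.sin (α i) * Real.sin (π - d - β i)) := by
      apply Finset.prod_lt_prod_of_nonempty _ (fun i _ => key i) hne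
      intro i _
      exact mul_pos (Real.sin_pos_of_pos_of_lt_pi hd0 hdπ)
        (Real.sin_pos_of_pos_of_lt_pi (hγ i).1 (hγ i).2)
    rw [Finset.prod_mul_distrib, Finset.prod_mul_distrib, Finset.prod_const,
      Finset.card_univ, Fintype.card_fin, ← hclose] at hprod
    have hP : 0 < ∏ i, Real.sin (α i) :=
      Finset.prod_pos fun i _ => Real.sin_pos_of_pos_of_lt_pi (hα i).1 (hα i).2
    set Q : ℝ := ∏ i, Real.sin (π - d - β i) with hQ
    have hQpos : 0 < Q :=
      Finset.prod_pos fun i _ =>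
        Real.sin_pos_of_pos_of_lt_pi (hdom i).1 (hdom i).2
    have hlt : Real.sin d ^ m < Q := by
      rw [mul_comm (Real.sin d ^ m)] at hprod
      exact lt_of_mul_lt_mul_left hprod hP.le
    -- Jensen: ∑ (1/m) sin(π - d - β i) ≤ sin d
    have hw0 : ∀ i ∈ (Finset.univ : Finset (Fin m)), (0:ℝ) ≤ (m:ℝ)⁻¹ :=
      fun i _ => by positivity
    have hw1 : ∑ _i : Fin m, (m:ℝ)⁻¹ = 1 := by
      rw [Finset.sum_const, Finset.card_univ, Fintype.card_fin, nsmul_eq_mul]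
      field_simp
    have hmem : ∀ i ∈ (Finset.univ : Finset (Fin m)),
        π - d - β i ∈ Set.Icc 0 π :=
      fun i _ => ⟨(hdom i).1.le, (hdom i).2.le⟩
    have jensen := (strictConcaveOn_sin_Icc.concaveOn).le_map_sum hw0 hw1 hmem
    have hinner : ∑ i : Fin m, (m:ℝ)⁻¹ • (π - d - β i) = d := by
      simp only [smul_eq_mul]
      rw [← Finset.mul_sum]
      have : ∑ i : Fin m, (π - d - β i) = m * (π - d) - 2 * π := by
        rw [Finset.sum_sub_distrib, hsum, Finset.sum_const, Finset.card_univ,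
          Fintype.card_fin, nsmul_eq_mul]
      rw [this, hd]
      field_simp
      ring
    rw [hinner] at jensen
    simp only [smul_eq_mul] at jensen
    -- AM-GM
    have amgm := Real.geom_mean_le_arith_mean_weighted Finset.univ
      (fun _ : Fin m => (m:ℝ)⁻¹) (fun i => Real.sin (π - d - β i)) hw0 hw1
      (fun i _ => (Real.sin_pos_of_pos_of_lt_pi (hdom i).1 (hdom i).2).le)
    have hQr : ∏ i : Fin m, Real.sin (π - d - β i) ^ ((m:ℝ)⁻¹) = Q ^ ((m:ℝ)⁻¹) := by
      rw [hQ, ← Real.finset_prod_rpow]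
      intro i _
      exact (Real.sin_pos_of_pos_of_lt_pi (hdom i).1 (hdom i).2).le
    rw [hQr] at amgm
    have hQle : Q ^ ((m:ℝ)⁻¹) ≤ Real.sin d := le_trans amgm jensen
    have hsd : 0 < Real.sin d := Real.sin_pos_of_pos_of_lt_pi hd0 hdπ
    have hQfinal : Q ≤ Real.sin d ^ m := by
      have := pow_le_pow_left₀ (Real.rpow_nonneg hQpos.le _) hQle m
      rwa [← Real.rpow_natCast (Q ^ ((m:ℝ)⁻¹)) m, ← Real.rpow_mul hQpos.le,
        inv_mul_cancel₀ (by positivity : (m:ℝ) ≠ 0), Real.rpow_one] at this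
    linarith
  · -- attainment
    intro α' β' γ' hα' hβ' hγ'
    subst hα'; subst hβ'; subst hγ'
    have h2πm : 0 < 2 * π / m := by positivity
    have h2πm' : 2 * π / m < π := by
      rw [div_lt_iff₀ hm0]; nlinarith
    refine ⟨fun i => ⟨hd0, hdπ⟩, fun i => ⟨h2πm, h2πm'⟩, fun i => ⟨hd0, hdπ⟩, ?_, ?_, rfl, ?_⟩
    · rw [Finset.sum_const, Finset.card_univ, Fintype.card_fin, nsmul_eq_mul]
      field_simp
    · intro i
      ring
    · exact Finset.inf'_const _ _
end

section
/- Let m ≥ 1 and let α_i, β_i, γ_i ∈ (0, π) for i = 1, …, m satisfy: ∑_i β_i = 2π, α_i + β_i + γ_i = π for each i, and ∏_i sin α_i = ∏_i sin γ_i. Then min_i α_i < π/2. -/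
open Real in
/-- Under the paper's conditions (Cond), the minimal angle `αᵢ` is less than `π/2`. -/
theorem min_alpha_lt_pi_div_two
    (m : ℕ) (hm : 1 ≤ m) (α β γ : Fin m → ℝ)
    (hα : ∀ i, α i ∈ Set.Ioo 0 π) (hβ : ∀ i, β i ∈ Set.Ioo 0 π)
    (hγ : ∀ i, γ i ∈ Set.Ioo 0 π)
    (hsum : ∑ i, β i = 2 * π)
    (htri : ∀ i, α i + β i + γ i = π)
    (hclose : ∏ i, Real.sin (α i) = ∏ i, Real.sin (γ i)) :
    Finset.univ.inf' ⟨⟨0, by omega⟩, Finset.mem_univ _⟩ α < π / 2 := by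
  by_contra h
  push_neg at h
  have hall : ∀ i, π / 2 ≤ α i := fun i =>
    le_trans h (Finset.inf'_le _ (Finset.mem_univ i))
  have key : ∀ i ∈ Finset.univ, Real.sin (γ i) < Real.sin (α i) := by
    intro i _
    have hαi := hα i; have hβi := hβ i; have hγi := hγ i
    rw [show Real.sin (α i) = Real.sin (π - α i) from (Real.sin_pi_sub _).symm]
    apply Real.sin_lt_sin_of_lt_of_le_pi_div_two
    · linarith [hγi.1, Real.pi_pos]
    · linarith [hall i]
    · linarith [htri i, hβi.1]
  have hpos : ∀ i ∈ Finset.univ, 0 < Real.sin (γ i) := fun i _ =>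
    Real.sin_pos_of_pos_of_lt_pi (hγ i).1 (hγ i).2
  have hne : (Finset.univ : Finset (Fin m)).Nonempty :=
    ⟨⟨0, by omega⟩, Finset.mem_univ _⟩
  have := Finset.prod_lt_prod_of_nonempty hpos key hne
  linarith [this, hclose.le]
end

section
/- Let a < 0 and b ∈ ℝ, and let 𝒦 be the 2×2 real matrix [[a, −b], [b, a]]. For every x ∈ ℝ² with x ≠ 0 and every t ≥ 0, the point exp(t𝒦)·x lies in the same closed half-plane, determined by the line { x + ε·𝒦x : ε ∈ ℝ }, as the origin; equivalently, the cross products (𝒦x) × (exp(t𝒦)x − x) and (𝒦x) × (0 − x) (where u × v = u_1 v_2 − u_2 v_1) are both ≥ 0 or both ≤ 0 for all t ≥ 0. -/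
open NormedSpace Real

noncomputable def cplxMat : ℂ →ₐ[ℝ] Matrix (Fin 2) (Fin 2) ℝ where
  toFun z := !![z.re, -z.im; z.im, z.re]
  map_one' := by ext i j; fin_cases i <;> fin_cases j <;> simp [Matrix.one_apply]
  map_mul' z w := by
    ext i j; fin_cases i <;> fin_cases j <;>
      simp [Matrix.mul_apply, Fin.sum_univ_two, Complex.mul_re, Complex.mul_im] <;> ring
  map_zero' := by ext i j; fin_cases i <;> fin_cases j <;> simp
  map_add' z w := by ext i j; fin_cases i <;> fin_cases j <;> simp <;> ring
  commutes' r := by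
    ext i j; fin_cases i <;> fin_cases j <;>
      simp [Matrix.algebraMap_matrix_apply]

lemma exp_rot (c d : ℝ) :
    exp (!![c, -d; d, c] : Matrix (Fin 2) (Fin 2) ℝ) =
      Real.exp c • !![Real.cos d, -Real.sin d; Real.sin d, Real.cos d] := by
  letI : SeminormedRing (Matrix (Fin 2) (Fin 2) ℝ) := Matrix.linftyOpSemiNormedRing
  letI : NormedRing (Matrix (Fin 2) (Fin 2) ℝ) := Matrix.linftyOpNormedRing
  letI : NormedAlgebra ℝ (Matrix (Fin 2) (Fin 2) ℝ) := Matrix.linftyOpNormedAlgebra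
  have h1 : (!![c, -d; d, c] : Matrix (Fin 2) (Fin 2) ℝ) = cplxMat ⟨c, d⟩ := by
    simp [cplxMat]
  rw [h1]
  erw [← map_exp cplxMat (cplxMat.toLinearMap.continuous_of_finiteDimensional)]
  have h2 : exp (⟨c, d⟩ : ℂ) = Complex.exp ⟨c, d⟩ := by
    rw [← Complex.exp_eq_exp_ℂ]
  rw [h2]
  ext i j
  fin_cases i <;> fin_cases j <;>
    simp [cplxMat, Complex.exp_re, Complex.exp_im, Matrix.smul_apply]

lemma key_deriv (a b : ℝ) (s : ℝ) :
    HasDerivAt (fun u => b - Real.exp (a*u) * (b * Real.cos (b*u) - a * Real.sin (b*u)))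
      ((a^2 + b^2) * Real.exp (a*s) * Real.sin (b*s)) s := by
  have hla : HasDerivAt (fun u : ℝ => a * u) a s := by
    simpa using (hasDerivAt_id s).const_mul a
  have hlb : HasDerivAt (fun u : ℝ => b * u) b s := by
    simpa using (hasDerivAt_id s).const_mul b
  have h := (hasDerivAt_const s b).sub
    (hla.exp.mul ((hlb.cos.const_mul b).sub (hlb.sin.const_mul a)))
  exact h.congr_deriv (by simp only [Pi.sub_apply]; ring)

lemma key_mono (a b : ℝ) (ha : a < 0) (hb : 0 < b) (t : ℝ) (ht : t ∈ Set.Icc 0 (π / b)) :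
    Real.exp (a*t) * (b * Real.cos (b*t) - a * Real.sin (b*t)) ≤ b := by
  have hmono : MonotoneOn (fun u => b - Real.exp (a*u) * (b * Real.cos (b*u) - a * Real.sin (b*u)))
      (Set.Icc 0 (π / b)) := by
    apply monotoneOn_of_deriv_nonneg (convex_Icc _ _)
    · apply Continuous.continuousOn; fun_prop
    · intro s _
      exact (key_deriv a b s).differentiableAt.differentiableWithinAt
    · intro s hs
      rw [interior_Icc] at hs
      rw [(key_deriv a b s).deriv]
      have hsin : 0 ≤ Real.sin (b*s) := by
        apply Real.sin_nonneg_of_nonneg_of_le_pi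
        · exact mul_nonneg hb.le hs.1.le
        · rw [← le_div_iff₀' hb]; exact hs.2.le
      exact mul_nonneg (mul_nonneg (by positivity) (Real.exp_pos _).le) hsin
  have h := hmono (Set.left_mem_Icc.mpr (by positivity)) ht ht.1
  simp only [mul_zero, Real.exp_zero, Real.cos_zero, Real.sin_zero] at h
  linarith [h]

lemma key (a b : ℝ) (ha : a < 0) (hb : 0 ≤ b) (t : ℝ) (ht : 0 ≤ t) :
    Real.exp (a*t) * (b * Real.cos (b*t) - a * Real.sin (b*t)) ≤ b := by
  rcases hb.eq_or_lt with rfl | hb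
  · simp
  rcases le_or_gt (Real.sin (b*t)) 0 with hs | hs
  · have he1 : Real.exp (a*t) ≤ 1 := Real.exp_le_one_iff.mpr (by nlinarith)
    have he0 : (0:ℝ) < Real.exp (a*t) := Real.exp_pos _
    have hc1 : Real.cos (b*t) ≤ 1 := Real.cos_le_one _
    nlinarith [mul_pos he0 hb, mul_nonneg (mul_nonneg he0.le (neg_nonneg.mpr ha.le)) (neg_nonneg.mpr hs)]
  · have h2π : (0:ℝ) < 2*π := by positivity
    set θ := b * t with hθ
    set k : ℤ := ⌊θ / (2*π)⌋ with hk
    have hk0 : (0:ℝ) ≤ (k:ℝ) := by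
      have : (0:ℤ) ≤ k := Int.floor_nonneg.mpr (by positivity)
      exact_mod_cast this
    set θ' := θ - k * (2*π) with hθ'
    have h1 : 0 ≤ θ' := by
      have h := (le_div_iff₀ h2π).mp (Int.floor_le (θ / (2*π)))
      simp only [← hk] at h ⊢
      linarith
    have h2 : θ' < 2*π := by
      have h := (div_lt_iff₀ h2π).mp (Int.lt_floor_add_one (θ / (2*π)))
      simp only [← hk] at h ⊢
      push_cast at h
      linarith
    have hsθ : Real.sin θ' = Real.sin θ := by
      rw [hθ', sub_eq_add_neg, ← neg_mul, ← Int.cast_neg, Real.sin_add_int_mul_two_pi]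
    have hcθ : Real.cos θ' = Real.cos θ := by
      rw [hθ', sub_eq_add_neg, ← neg_mul, ← Int.cast_neg, Real.cos_add_int_mul_two_pi]
    have hsin' : 0 < Real.sin θ' := hsθ ▸ hs
    have hθ'π : θ' ≤ π := by
      by_contra hcon
      push_neg at hcon
      have hx : 0 ≤ Real.sin (θ' - π) := by
        apply Real.sin_nonneg_of_nonneg_of_le_pi <;> linarith
      rw [Real.sin_sub_pi] at hx
      linarith
    set t' := θ' / b with ht'
    have hbt' : b * t' = θ' := by rw [ht']; field_simp
    have htt' : t' ≤ t := by
      rw [ht', div_le_iff₀ hb]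
      have : (0:ℝ) ≤ (k:ℝ) * (2*π) := by positivity
      rw [hθ']; rw [hθ]; linarith [mul_comm t b]
    have hkey := key_mono a b ha hb t' ⟨by positivity, by rw [ht']; gcongr⟩
    rw [hbt'] at hkey
    rw [← hsθ, ← hcθ]
    rcases le_or_gt 0 (b * Real.cos θ' - a * Real.sin θ') with hpos | hneg
    · have hE : Real.exp (a*t) ≤ Real.exp (a*t') := Real.exp_le_exp.mpr (by nlinarith)
      exact le_trans (mul_le_mul_of_nonneg_right hE hpos) hkey
    · nlinarith [Real.exp_pos (a*t)]

/-- For the rotation-with-contraction matrix `𝒦 = [[a, −b], [b, a]]` with `a < 0`, every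
forward semi-trajectory `exp(t𝒦) x` (`t ≥ 0`) stays in the same closed half-plane,
bounded by the line `{x + ε 𝒦x}`, containing the origin: the cross products
`(𝒦x) × (exp(t𝒦)x − x)` and `(𝒦x) × (0 − x)` are both `≥ 0` for all `t ≥ 0` or both
`≤ 0` for all `t ≥ 0`. -/
theorem semitrajectory_same_halfplane_as_origin
    (a b : ℝ) (ha : a < 0)
    (Kmat : Matrix (Fin 2) (Fin 2) ℝ) (hK : Kmat = !![a, -b; b, a])
    (x : Fin 2 → ℝ) (hx : x ≠ 0)
    (cross : (Fin 2 → ℝ) → (Fin 2 → ℝ) → ℝ)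
    (hcross : ∀ u v, cross u v = u 0 * v 1 - u 1 * v 0) :
    (∀ t : ℝ, 0 ≤ t →
        0 ≤ cross (Kmat.mulVec x) ((NormedSpace.exp (t • Kmat)).mulVec x - x) ∧
        0 ≤ cross (Kmat.mulVec x) (0 - x)) ∨
    (∀ t : ℝ, 0 ≤ t →
        cross (Kmat.mulVec x) ((NormedSpace.exp (t • Kmat)).mulVec x - x) ≤ 0 ∧
        cross (Kmat.mulVec x) (0 - x) ≤ 0) := by
  have hr2 : 0 < x 0 ^ 2 + x 1 ^ 2 := by
    rcases Function.ne_iff.mp hx with ⟨i, hi⟩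
    simp only [Pi.zero_apply] at hi
    fin_cases i
    · have h : x 0 ≠ 0 := hi
      nlinarith [sq_nonneg (x 1), sq_pos_of_ne_zero h]
    · have h : x 1 ≠ 0 := hi
      nlinarith [sq_nonneg (x 0), sq_pos_of_ne_zero h]
  have hKx : Kmat.mulVec x = ![a * x 0 - b * x 1, b * x 0 + a * x 1] := by
    rw [hK]; ext i; fin_cases i <;>
      simp [Matrix.mulVec, dotProduct, Fin.sum_univ_two] <;> ring
  have hcross2 : cross (Kmat.mulVec x) (0 - x) = b * (x 0 ^ 2 + x 1 ^ 2) := by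
    rw [hcross, hKx]
    simp [Pi.sub_apply]
    ring
  have hexp : ∀ t : ℝ, (NormedSpace.exp (t • Kmat)).mulVec x =
      Real.exp (a * t) • ![Real.cos (b * t) * x 0 - Real.sin (b * t) * x 1,
        Real.sin (b * t) * x 0 + Real.cos (b * t) * x 1] := by
    intro t
    have hsm : t • Kmat = !![a * t, -(b * t); b * t, a * t] := by
      rw [hK]; ext i j; fin_cases i <;> fin_cases j <;> simp [Matrix.smul_apply] <;> ring
    rw [hsm, exp_rot]
    rw [Matrix.smul_mulVec]
    congr 1
    ext i; fin_cases i <;>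
      simp [Matrix.mulVec, dotProduct, Fin.sum_univ_two] <;> ring
  have hcross1 : ∀ t : ℝ, cross (Kmat.mulVec x) ((NormedSpace.exp (t • Kmat)).mulVec x - x)
      = (x 0 ^ 2 + x 1 ^ 2) *
        (b - Real.exp (a * t) * (b * Real.cos (b * t) - a * Real.sin (b * t))) := by
    intro t
    rw [hcross, hexp t, hKx]
    simp [Pi.sub_apply, Pi.smul_apply, smul_eq_mul]
    ring
  rcases le_or_gt 0 b with hb | hb
  · left
    intro t ht
    constructor
    · rw [hcross1 t]
      have := key a b ha hb t ht
      nlinarith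
    · rw [hcross2]; positivity
  · right
    intro t ht
    have hkey := key a (-b) ha (by linarith) t ht
    rw [show (-b) * t = -(b*t) by ring, Real.cos_neg, Real.sin_neg] at hkey
    constructor
    · rw [hcross1 t]
      nlinarith
    · rw [hcross2]
      nlinarith
end
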